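/- arXiv:2210.09720 — 10 statements merged into one kernel-verified Lean document; each statement's English description precedes it below -/
import Mathlib

section
/- Let $E$ be a Riesz space and $x, y \in E$ with $x \sqsubseteq y$ (i.e., $x \perp (y-x)$). Then $x^+ \sqsubseteq y^+$, $x^- \sqsubseteq y^-$, and $|x| \sqsubseteq |y|$. -/
/-- Disjointness in a Riesz space: `|x| ⊓ |y| = 0`. -/
def RDisjoint {E : Type*} [Lattice E] [AddCommGroup E] (x y : E) : Prop :=
  |x| ⊓ |y| = 0

/-- `x` is a fragment of `e` (lateral order `x ⊑ e`): `x ⊥ (e - x)`. -/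
def IsFragment {E : Type*} [Lattice E] [AddCommGroup E] (x e : E) : Prop :=
  RDisjoint x (e - x)

/-- An orthogonally additive operator. -/
def IsOAO {E F : Type*} [Lattice E] [AddCommGroup E] [Lattice F] [AddCommGroup F]
    (T : E → F) : Prop :=
  ∀ x y : E, RDisjoint x y → T (x + y) = T x + T y

variable {E F : Type*}
  [Lattice E] [AddCommGroup E] [CovariantClass E E (· + ·) (· ≤ ·)]
  [Lattice F] [AddCommGroup F] [CovariantClass F F (· + ·) (· ≤ ·)]

section Aux

/-- Subadditivity of inf for nonneg elements. -/
private lemma inf_add_subadd (a b c : E) (ha : 0 ≤ a) (hb : 0 ≤ b) (hc : 0 ≤ c) :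
    (a + b) ⊓ c ≤ a ⊓ c + b ⊓ c := by
  have h1 : a ⊓ c + b ⊓ c = ((a + b) ⊓ (a + c)) ⊓ ((c + b) ⊓ (c + c)) := by
    rw [add_inf, inf_add, inf_add]
    ac_rfl
  rw [h1]
  refine le_inf (le_inf ?_ ?_) (le_inf ?_ ?_)
  · exact inf_le_left
  · calc (a + b) ⊓ c ≤ c := inf_le_right
      _ ≤ a + c := le_add_of_nonneg_left ha
  · calc (a + b) ⊓ c ≤ c := inf_le_right
      _ ≤ c + b := le_add_of_nonneg_right hb
  · calc (a + b) ⊓ c ≤ c := inf_le_right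
      _ ≤ c + c := le_add_of_nonneg_left hc

private lemma inf_zero_add (a b c : E) (ha : 0 ≤ a) (hb : 0 ≤ b) (hc : 0 ≤ c)
    (h1 : a ⊓ c = 0) (h2 : b ⊓ c = 0) : (a + b) ⊓ c = 0 := by
  refine le_antisymm ?_ (le_inf (add_nonneg ha hb) hc)
  calc (a + b) ⊓ c ≤ a ⊓ c + b ⊓ c := inf_add_subadd a b c ha hb hc
    _ = 0 := by rw [h1, h2, add_zero]

private lemma inf_zero_mono {a b u v : E} (hu : 0 ≤ u) (hv : 0 ≤ v)
    (hua : u ≤ a) (hvb : v ≤ b) (h : a ⊓ b = 0) : u ⊓ v = 0 :=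
  le_antisymm (h ▸ inf_le_inf hua hvb) (le_inf hu hv)

private lemma posPart_le_abs' (a : E) : a⁺ ≤ |a| :=
  sup_le (le_abs_self a) (abs_nonneg a)

private lemma negPart_le_abs' (a : E) : a⁻ ≤ |a| :=
  sup_le (neg_le_abs a) (abs_nonneg a)

/-- Uniqueness of the Jordan decomposition. -/
private lemma posPart_negPart_unique {c p n : E} (hp : 0 ≤ p) (hn : 0 ≤ n)
    (hpn : p ⊓ n = 0) (hc : c = p - n) : c⁺ = p ∧ c⁻ = n := by
  have hsup : p ⊔ n = p + n := by
    have := inf_add_sup p n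
    rw [hpn, zero_add] at this
    exact this
  constructor
  · have h0 : c⁺ = (p - n) ⊔ 0 := by rw [hc]; rfl
    rw [h0, show (0 : E) = n - n from (sub_self n).symm, ← sup_sub, hsup]
    abel
  · have h0 : c⁻ = (n - p) ⊔ 0 := by
      rw [negPart_def, hc]; congr 1; abel
    rw [h0, show (0 : E) = p - p from (sub_self p).symm, ← sup_sub, sup_comm, hsup]
    abel

/-- For disjoint elements, pos/neg parts and abs are additive. -/
private lemma parts_add {a b : E} (h : |a| ⊓ |b| = 0) :
    (a + b)⁺ = a⁺ + b⁺ ∧ (a + b)⁻ = a⁻ + b⁻ := by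
  set p := a⁺ + b⁺ with hpdef
  set n := a⁻ + b⁻ with hndef
  have hp : 0 ≤ p := add_nonneg (posPart_nonneg a) (posPart_nonneg b)
  have hn : 0 ≤ n := add_nonneg (negPart_nonneg a) (negPart_nonneg b)
  have h1 : a⁺ ⊓ a⁻ = 0 := posPart_inf_negPart_eq_zero a
  have h2 : b⁺ ⊓ a⁻ = 0 := inf_zero_mono (posPart_nonneg b) (negPart_nonneg a)
    (posPart_le_abs' b) (negPart_le_abs' a) (by rw [inf_comm]; exact h)
  have h3 : a⁺ ⊓ b⁻ = 0 := inf_zero_mono (posPart_nonneg a) (negPart_nonneg b)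
    (posPart_le_abs' a) (negPart_le_abs' b) h
  have h4 : b⁺ ⊓ b⁻ = 0 := posPart_inf_negPart_eq_zero b
  have hpa : p ⊓ a⁻ = 0 := inf_zero_add _ _ _ (posPart_nonneg a) (posPart_nonneg b)
    (negPart_nonneg a) h1 h2
  have hpb : p ⊓ b⁻ = 0 := inf_zero_add _ _ _ (posPart_nonneg a) (posPart_nonneg b)
    (negPart_nonneg b) h3 h4
  have hpn : p ⊓ n = 0 := by
    rw [inf_comm]
    exact inf_zero_add _ _ _ (negPart_nonneg a) (negPart_nonneg b) hp
      (by rw [inf_comm]; exact hpa) (by rw [inf_comm]; exact hpb)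
  have hc : a + b = p - n := by
    rw [hpdef, hndef, show a⁺ + b⁺ - (a⁻ + b⁻) = (a⁺ - a⁻) + (b⁺ - b⁻) by abel,
      posPart_sub_negPart, posPart_sub_negPart]
  exact posPart_negPart_unique hp hn hpn hc

end Aux

/-- If `x ⊑ y` then `x⁺ ⊑ y⁺`, `x⁻ ⊑ y⁻` and `|x| ⊑ |y|`. -/
theorem isFragment_posPart_negPart_abs (x y : E) (h : IsFragment x y) :
    IsFragment x⁺ y⁺ ∧ IsFragment x⁻ y⁻ ∧ IsFragment |x| |y| := by
  unfold IsFragment RDisjoint at *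
  set d := y - x with hd
  have hxd : x + d = y := by rw [hd]; abel
  obtain ⟨hpos, hneg⟩ := parts_add h
  rw [hxd] at hpos hneg
  have habs : |y| = |x| + |d| := by
    rw [← posPart_add_negPart y, hpos, hneg,
      ← posPart_add_negPart x, ← posPart_add_negPart d]
    abel
  have hdp : x⁺ ⊓ d⁺ = 0 := inf_zero_mono (posPart_nonneg x) (posPart_nonneg d)
    (posPart_le_abs' x) (posPart_le_abs' d) h
  have hdn : x⁻ ⊓ d⁻ = 0 := inf_zero_mono (negPart_nonneg x) (negPart_nonneg d)
    (negPart_le_abs' x) (negPart_le_abs' d) h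
  refine ⟨?_, ?_, ?_⟩
  · have : y⁺ - x⁺ = d⁺ := by rw [hpos]; abel
    rw [this, abs_of_nonneg (posPart_nonneg x), abs_of_nonneg (posPart_nonneg d)]
    exact hdp
  · have : y⁻ - x⁻ = d⁻ := by rw [hneg]; abel
    rw [this, abs_of_nonneg (negPart_nonneg x), abs_of_nonneg (negPart_nonneg d)]
    exact hdn
  · have : |y| - |x| = |d| := by rw [habs]; abel
    rw [this, abs_of_nonneg (abs_nonneg x), abs_of_nonneg (abs_nonneg d)]
    exact h
end

section
/- Let $E$ be a Riesz space, $u_1, \ldots, u_m, v_1, \ldots, v_n \in E$, and suppose $e = u_1 \sqcup \cdots \sqcup u_m = v_1 \sqcup \cdots \sqcup v_n$ are two decompositions of $e$ into pairwise disjoint summands. Then there exists a doubly indexed family $(w_{i,k})$, $1 \le i \le m$, $1 \le k \le n$, of pairwise disjoint elements of $E$ such that $u_i = \bigsqcup_{k=1}^n w_{i,k}$ for each $i$ and $v_k = \bigsqcup_{i=1}^m w_{i,k}$ for each $k$. -/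
variable {E F : Type*}
  [Lattice E] [AddCommGroup E] [CovariantClass E E (· + ·) (· ≤ ·)]
  [Lattice F] [AddCommGroup F] [CovariantClass F F (· + ·) (· ≤ ·)]

section Helpers

set_option linter.unusedSectionVars false
set_option linter.unusedVariables false

private lemma sum_nonneg' {ι : Type*} {s : Finset ι} {f : ι → E}
    (hf : ∀ i ∈ s, 0 ≤ f i) : 0 ≤ ∑ i ∈ s, f i := by
  induction s using Finset.cons_induction with
  | empty => simp
  | cons i s hi ih =>
    rw [Finset.sum_cons]
    exact Left.add_nonneg (hf i (Finset.mem_cons_self i s))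
      (ih fun j hj => hf j (Finset.mem_cons_of_mem hj))

private lemma le_sum' {ι : Type*} {s : Finset ι} {f : ι → E} {i : ι} (hi : i ∈ s)
    (hf : ∀ j ∈ s, 0 ≤ f j) : f i ≤ ∑ j ∈ s, f j := by
  induction s using Finset.cons_induction with
  | empty => exact absurd hi (Finset.notMem_empty i)
  | cons a s ha ih =>
    rw [Finset.sum_cons]
    rcases Finset.mem_cons.mp hi with rfl | h
    · exact le_add_of_nonneg_right (sum_nonneg' fun j hj => hf j (Finset.mem_cons_of_mem hj))
    · exact (ih h fun j hj => hf j (Finset.mem_cons_of_mem hj)).trans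
        (le_add_of_nonneg_left (hf a (Finset.mem_cons_self a s)))

private lemma dl (x y z : E) : x ⊓ (y ⊔ z) = (x ⊓ y) ⊔ (x ⊓ z) := by
  letI : DistribLattice E := AddCommGroup.toDistribLattice E
  exact inf_sup_left x y z

private lemma inf_zero_of_le {a b a' b' : E} (ha' : 0 ≤ a') (hb' : 0 ≤ b')
    (ha : a' ≤ a) (hb : b' ≤ b) (h : a ⊓ b = 0) : a' ⊓ b' = 0 :=
  le_antisymm (h ▸ inf_le_inf ha hb) (le_inf ha' hb')

private lemma inf3 {a b c : E} (ha : 0 ≤ a) (hb : 0 ≤ b) (hc : 0 ≤ c)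
    (h1 : a ⊓ c = 0) (h2 : b ⊓ c = 0) : (a + b) ⊓ c = 0 := by
  have key : a ⊓ c + b ⊓ c = ((a + b) ⊓ (c + b)) ⊓ ((a + c) ⊓ (c + c)) := by
    rw [add_inf b c (a ⊓ c), inf_add a c b, inf_add a c c]
  have hle : (a + b) ⊓ c ≤ a ⊓ c + b ⊓ c := by
    rw [key]
    refine le_inf (le_inf inf_le_left ?_) (le_inf ?_ ?_)
    · exact inf_le_right.trans (le_add_of_nonneg_right hb)
    · exact inf_le_right.trans (le_add_of_nonneg_left ha)
    · exact inf_le_right.trans (le_add_of_nonneg_left hc)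
  rw [h1, h2, add_zero] at hle
  exact le_antisymm hle (le_inf (add_nonneg ha hb) hc)

private lemma inf_sum_zero {ι : Type*} (s : Finset ι) (f : ι → E) (a : E) (h0 : 0 ≤ a)
    (hf : ∀ i ∈ s, 0 ≤ f i) (h : ∀ i ∈ s, a ⊓ f i = 0) : a ⊓ ∑ i ∈ s, f i = 0 := by
  induction s using Finset.cons_induction with
  | empty => simpa using h0
  | cons i s hi ih =>
    rw [Finset.sum_cons, inf_comm]
    refine inf3 (hf i (Finset.mem_cons_self i s)) ?_ h0 ?_ ?_
    · exact sum_nonneg' fun j hj => hf j (Finset.mem_cons_of_mem hj)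
    · rw [inf_comm]; exact h i (Finset.mem_cons_self i s)
    · rw [inf_comm]
      exact ih (fun j hj => hf j (Finset.mem_cons_of_mem hj))
        (fun j hj => h j (Finset.mem_cons_of_mem hj))

private lemma sup_eq_add_of_inf_zero {a b : E} (h : a ⊓ b = 0) : a ⊔ b = a + b := by
  have := inf_add_sup a b
  rw [h, zero_add] at this
  exact this

private lemma inf_add_of_disj {x a b : E} (hx : 0 ≤ x) (ha : 0 ≤ a) (hb : 0 ≤ b)
    (hab : a ⊓ b = 0) : x ⊓ (a + b) = x ⊓ a + x ⊓ b := by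
  have h2 : (x ⊓ a) ⊓ (x ⊓ b) = 0 :=
    inf_zero_of_le (le_inf hx ha) (le_inf hx hb) inf_le_right inf_le_right hab
  rw [← sup_eq_add_of_inf_zero hab, dl, sup_eq_add_of_inf_zero h2]

private lemma inf_sum_eq {ι : Type*} (s : Finset ι) (f : ι → E) (x : E) (hx : 0 ≤ x)
    (hf : ∀ i ∈ s, 0 ≤ f i) (hd : ∀ i ∈ s, ∀ j ∈ s, i ≠ j → f i ⊓ f j = 0) :
    x ⊓ ∑ i ∈ s, f i = ∑ i ∈ s, x ⊓ f i := by
  induction s using Finset.cons_induction with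
  | empty => simpa using hx
  | cons i s hi ih =>
    rw [Finset.sum_cons, Finset.sum_cons,
      inf_add_of_disj hx (hf i (Finset.mem_cons_self i s))
        (sum_nonneg' fun j hj => hf j (Finset.mem_cons_of_mem hj))
        (inf_sum_zero s f (f i) (hf i (Finset.mem_cons_self i s))
          (fun j hj => hf j (Finset.mem_cons_of_mem hj))
          (fun j hj => hd i (Finset.mem_cons_self i s) j (Finset.mem_cons_of_mem hj)
            (fun hij => hi (hij ▸ hj)))),
      ih (fun j hj => hf j (Finset.mem_cons_of_mem hj))
        (fun j hj k hk => hd j (Finset.mem_cons_of_mem hj) k (Finset.mem_cons_of_mem hk))]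

private lemma posPart_eq_of {p q : E} (hp : 0 ≤ p) (hq : 0 ≤ q) (hpq : p ⊓ q = 0) :
    (p - q)⁺ = p := by
  rw [posPart_def]
  have : (p - q) ⊔ 0 = (p - q) ⊔ (q - q) := by rw [sub_self]
  rw [this, ← sup_sub, sup_eq_add_of_inf_zero hpq, add_sub_cancel_right]

private lemma negPart_eq_of {p q : E} (hp : 0 ≤ p) (hq : 0 ≤ q) (hpq : p ⊓ q = 0) :
    (p - q)⁻ = q := by
  rw [negPart_def, neg_sub]
  rw [← posPart_def]
  exact posPart_eq_of hq hp (by rw [inf_comm]; exact hpq)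

private lemma abs_eq_of {p q : E} (hp : 0 ≤ p) (hq : 0 ≤ q) (hpq : p ⊓ q = 0) :
    |p - q| = p + q := by
  rw [← posPart_add_negPart (p - q), posPart_eq_of hp hq hpq, negPart_eq_of hp hq hpq]

private lemma sum_inf_sum_zero {ι κ : Type*} (s : Finset ι) (t : Finset κ)
    (f : ι → E) (g : κ → E) (hf : ∀ i ∈ s, 0 ≤ f i) (hg : ∀ j ∈ t, 0 ≤ g j)
    (h : ∀ i ∈ s, ∀ j ∈ t, f i ⊓ g j = 0) :
    (∑ i ∈ s, f i) ⊓ (∑ j ∈ t, g j) = 0 := by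
  refine inf_sum_zero t g _ (sum_nonneg' hf) hg fun j hj => ?_
  rw [inf_comm]
  exact inf_sum_zero s f (g j) (hg j hj) hf fun i hi => by
    rw [inf_comm]; exact h i hi j hj

private lemma parts_sum {ι : Type*} (s : Finset ι) (f : ι → E)
    (hd : ∀ i ∈ s, ∀ j ∈ s, i ≠ j → |f i| ⊓ |f j| = 0) :
    (∑ i ∈ s, f i)⁺ = ∑ i ∈ s, (f i)⁺ ∧ (∑ i ∈ s, f i)⁻ = ∑ i ∈ s, (f i)⁻ := by
  have key : (∑ i ∈ s, (f i)⁺) ⊓ (∑ i ∈ s, (f i)⁻) = 0 := by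
    refine sum_inf_sum_zero s s _ _ (fun i _ => (posPart_nonneg _)) (fun j _ => (negPart_nonneg _))
      fun i hi j hj => ?_
    rcases eq_or_ne i j with rfl | hij
    · exact posPart_inf_negPart_eq_zero _
    · exact inf_zero_of_le (posPart_nonneg _) (negPart_nonneg _) (posPart_le_abs' _)
        (negPart_le_abs' _) (hd i hi j hj hij)
  have hrw : ∑ i ∈ s, f i = (∑ i ∈ s, (f i)⁺) - (∑ i ∈ s, (f i)⁻) := by
    rw [← Finset.sum_sub_distrib]
    exact Finset.sum_congr rfl fun i _ => (posPart_sub_negPart _).symm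
  have hp := sum_nonneg' (s := s) (f := fun i => (f i)⁺) fun i _ => (posPart_nonneg _)
  have hq := sum_nonneg' (s := s) (f := fun i => (f i)⁻) fun i _ => (negPart_nonneg _)
  rw [hrw]
  exact ⟨posPart_eq_of hp hq key, negPart_eq_of hp hq key⟩

end Helpers

/-- Lateral analogue of the Riesz decomposition property (Pliev's lemma). -/
theorem lateral_riesz_decomposition {m n : ℕ} (e : E) (u : Fin m → E) (v : Fin n → E)
    (hu : ∀ i j, i ≠ j → RDisjoint (u i) (u j))
    (hv : ∀ k l, k ≠ l → RDisjoint (v k) (v l))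
    (heu : e = ∑ i, u i) (hev : e = ∑ k, v k) :
    ∃ w : Fin m → Fin n → E,
      (∀ (p q : Fin m × Fin n), p ≠ q → RDisjoint (w p.1 p.2) (w q.1 q.2)) ∧
      (∀ i, u i = ∑ k, w i k) ∧
      (∀ k, v k = ∑ i, w i k) := by
  classical
  have hu' : ∀ i j, i ≠ j → |u i| ⊓ |u j| = 0 := hu
  have hv' : ∀ k l, k ≠ l → |v k| ⊓ |v l| = 0 := hv
  obtain ⟨hup, hun⟩ := parts_sum Finset.univ u fun i _ j _ h => hu' i j h
  obtain ⟨hvp, hvn⟩ := parts_sum Finset.univ v fun k _ l _ h => hv' k l h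
  have hsum : ∑ i, u i = ∑ k, v k := heu ▸ hev
  have hPsum : (∑ i, (u i)⁺ : E) = ∑ k, (v k)⁺ := by rw [← hup, ← hvp, hsum]
  have hNsum : (∑ i, (u i)⁻ : E) = ∑ k, (v k)⁻ := by rw [← hun, ← hvn, hsum]
  -- basic disjointness facts between parts
  have hab : ∀ i j, (u i)⁺ ⊓ (u j)⁻ = 0 := by
    intro i j
    rcases eq_or_ne i j with rfl | h
    · exact posPart_inf_negPart_eq_zero _
    · exact inf_zero_of_le (posPart_nonneg _) (negPart_nonneg _) (posPart_le_abs' _)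
        (negPart_le_abs' _) (hu' i j h)
  have haa : ∀ i j, i ≠ j → (u i)⁺ ⊓ (u j)⁺ = 0 := fun i j h =>
    inf_zero_of_le (posPart_nonneg _) (posPart_nonneg _) (posPart_le_abs' _)
      (posPart_le_abs' _) (hu' i j h)
  have hbb : ∀ i j, i ≠ j → (u i)⁻ ⊓ (u j)⁻ = 0 := fun i j h =>
    inf_zero_of_le (negPart_nonneg _) (negPart_nonneg _) (negPart_le_abs' _)
      (negPart_le_abs' _) (hu' i j h)
  have hcc : ∀ k l, k ≠ l → (v k)⁺ ⊓ (v l)⁺ = 0 := fun k l h =>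
    inf_zero_of_le (posPart_nonneg _) (posPart_nonneg _) (posPart_le_abs' _)
      (posPart_le_abs' _) (hv' k l h)
  have hdd : ∀ k l, k ≠ l → (v k)⁻ ⊓ (v l)⁻ = 0 := fun k l h =>
    inf_zero_of_le (negPart_nonneg _) (negPart_nonneg _) (negPart_le_abs' _)
      (negPart_le_abs' _) (hv' k l h)
  set P : Fin m → Fin n → E := fun i k => (u i)⁺ ⊓ (v k)⁺ with hP
  set Q : Fin m → Fin n → E := fun i k => (u i)⁻ ⊓ (v k)⁻ with hQ
  have hPnn : ∀ i k, 0 ≤ P i k := fun i k => le_inf (posPart_nonneg _) (posPart_nonneg _)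
  have hQnn : ∀ i k, 0 ≤ Q i k := fun i k => le_inf (negPart_nonneg _) (negPart_nonneg _)
  have hPQ : ∀ i k i' k', P i k ⊓ Q i' k' = 0 := fun i k i' k' =>
    inf_zero_of_le (hPnn i k) (hQnn i' k') inf_le_left inf_le_left (hab i i')
  have hPP : ∀ i k i' k', (i, k) ≠ (i', k') → P i k ⊓ P i' k' = 0 := by
    intro i k i' k' h
    rcases eq_or_ne i i' with rfl | hi
    · have hk : k ≠ k' := fun hk => h (by rw [hk])
      exact inf_zero_of_le (hPnn i k) (hPnn i k') inf_le_right inf_le_right (hcc k k' hk)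
    · exact inf_zero_of_le (hPnn i k) (hPnn i' k') inf_le_left inf_le_left (haa i i' hi)
  have hQQ : ∀ i k i' k', (i, k) ≠ (i', k') → Q i k ⊓ Q i' k' = 0 := by
    intro i k i' k' h
    rcases eq_or_ne i i' with rfl | hi
    · have hk : k ≠ k' := fun hk => h (by rw [hk])
      exact inf_zero_of_le (hQnn i k) (hQnn i k') inf_le_right inf_le_right (hdd k k' hk)
    · exact inf_zero_of_le (hQnn i k) (hQnn i' k') inf_le_left inf_le_left (hbb i i' hi)
  refine ⟨fun i k => P i k - Q i k, ?_, ?_, ?_⟩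
  · intro p q hpq
    show |P p.1 p.2 - Q p.1 p.2| ⊓ |P q.1 q.2 - Q q.1 q.2| = 0
    rw [abs_eq_of (hPnn _ _) (hQnn _ _) (hPQ _ _ _ _),
      abs_eq_of (hPnn _ _) (hQnn _ _) (hPQ _ _ _ _)]
    have hne : (p.1, p.2) ≠ (q.1, q.2) := by simpa using hpq
    have hne' : (q.1, q.2) ≠ (p.1, p.2) := fun h => hne h.symm
    have hQP : ∀ (i : Fin m) (k : Fin n) i' k', Q i k ⊓ P i' k' = 0 := fun i k i' k' => by
      rw [inf_comm]; exact hPQ i' k' i k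
    refine inf3 (hPnn _ _) (hQnn _ _) (Left.add_nonneg (hPnn _ _) (hQnn _ _)) ?_ ?_
    · rw [inf_comm]
      exact inf3 (hPnn _ _) (hQnn _ _) (hPnn _ _) (hPP _ _ _ _ hne') (hQP _ _ _ _)
    · rw [inf_comm]
      exact inf3 (hPnn _ _) (hQnn _ _) (hQnn _ _) (hPQ _ _ _ _) (hQQ _ _ _ _ hne')
  · intro i
    have h1 : ∑ k, P i k = (u i)⁺ := by
      rw [hP]
      rw [← inf_sum_eq Finset.univ (fun k => (v k)⁺) ((u i)⁺) (posPart_nonneg _)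
        (fun k _ => (posPart_nonneg _)) (fun k _ l _ h => hcc k l h)]
      rw [← hPsum]
      exact inf_eq_left.mpr (le_sum' (Finset.mem_univ i) fun j _ => (posPart_nonneg _))
    have h2 : ∑ k, Q i k = (u i)⁻ := by
      rw [hQ]
      rw [← inf_sum_eq Finset.univ (fun k => (v k)⁻) ((u i)⁻) (negPart_nonneg _)
        (fun k _ => (negPart_nonneg _)) (fun k _ l _ h => hdd k l h)]
      rw [← hNsum]
      exact inf_eq_left.mpr (le_sum' (Finset.mem_univ i) fun j _ => (negPart_nonneg _))
    rw [Finset.sum_sub_distrib, h1, h2, posPart_sub_negPart]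
  · intro k
    have h1 : ∑ i, P i k = (v k)⁺ :=
      calc ∑ i, P i k = ∑ i, (v k)⁺ ⊓ (u i)⁺ :=
            Finset.sum_congr rfl fun i _ => inf_comm _ _
        _ = (v k)⁺ ⊓ ∑ i, (u i)⁺ :=
            (inf_sum_eq Finset.univ (fun i => (u i)⁺) ((v k)⁺) (posPart_nonneg _)
              (fun i _ => (posPart_nonneg _)) (fun i _ j _ h => haa i j h)).symm
        _ = (v k)⁺ := by
            rw [hPsum]
            exact inf_eq_left.mpr (le_sum' (Finset.mem_univ k) fun l _ => (posPart_nonneg _))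
    have h2 : ∑ i, Q i k = (v k)⁻ :=
      calc ∑ i, Q i k = ∑ i, (v k)⁻ ⊓ (u i)⁻ :=
            Finset.sum_congr rfl fun i _ => inf_comm _ _
        _ = (v k)⁻ ⊓ ∑ i, (u i)⁻ :=
            (inf_sum_eq Finset.univ (fun i => (u i)⁻) ((v k)⁻) (negPart_nonneg _)
              (fun i _ => (negPart_nonneg _)) (fun i _ j _ h => hbb i j h)).symm
        _ = (v k)⁻ := by
            rw [hNsum]
            exact inf_eq_left.mpr (le_sum' (Finset.mem_univ k) fun l _ => (negPart_nonneg _))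
    rw [Finset.sum_sub_distrib, h1, h2, posPart_sub_negPart]
end

section
/- Let $E, F$ be Riesz spaces and $T : E \to F$ an orthogonally additive operator that preserves the lateral order (i.e., $x \sqsubseteq y$ implies $T(x) \sqsubseteq T(y)$). Then $T$ preserves disjointness. -/
variable {E F : Type*}
  [Lattice E] [AddCommGroup E] [CovariantClass E E (· + ·) (· ≤ ·)]
  [Lattice F] [AddCommGroup F] [CovariantClass F F (· + ·) (· ≤ ·)]

/-- A lateral order preserving OAO preserves disjointness. -/
theorem oao_lateral_order_preserving_preserves_disjointness (T : E → F)
    (hT : IsOAO T)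
    (hlat : ∀ x y : E, IsFragment x y → IsFragment (T x) (T y)) :
    ∀ x y : E, RDisjoint x y → RDisjoint (T x) (T y) := by
  intro x y hxy
  have hfrag : IsFragment x (x + y) := by
    simpa [IsFragment] using hxy
  have h := hlat x (x + y) hfrag
  rw [IsFragment, hT x y hxy] at h
  simpa using h
end

section
/- Let $E, F$ be Riesz spaces with $F$ Archimedean. Every orthogonally additive operator $T : E \to F$ is laterally-to-order bounded if and only if either $F = \{0\}$ or the set $\mathfrak{F}_e$ of fragments of $e$ is finite for every $e \in E$. -/
namespace OAOHelper

variable {E : Type*} [Lattice E] [AddCommGroup E] [CovariantClass E E (· + ·) (· ≤ ·)]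

lemma nsmul_nonneg' {x : E} (h : 0 ≤ x) : ∀ n : ℕ, 0 ≤ n • x
  | 0 => by rw [zero_nsmul]
  | (n+1) => by rw [succ_nsmul]; exact add_nonneg (nsmul_nonneg' h n) h

lemma zsmul_nonneg' {x : E} (h : 0 ≤ x) {n : ℤ} (hn : 0 ≤ n) : 0 ≤ n • x := by
  lift n to ℕ using hn
  rw [natCast_zsmul]
  exact nsmul_nonneg' h n

lemma inf_add_le {u a b : E} (hu : 0 ≤ u) (ha : 0 ≤ a) (hb : 0 ≤ b) :
    u ⊓ (a + b) ≤ u ⊓ a + u ⊓ b := by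
  have h1 : u ⊓ (a + b) - b ≤ u ⊓ a := by
    refine le_inf ?_ ?_
    · have := sub_le_sub (inf_le_left : u ⊓ (a + b) ≤ u) hb
      simpa using this
    · exact sub_le_iff_le_add.mpr inf_le_right
  have h2 : u ⊓ (a + b) - (u ⊓ a) ≤ u ⊓ b := by
    refine le_inf ?_ ?_
    · have := sub_le_sub (inf_le_left : u ⊓ (a + b) ≤ u) (le_inf hu ha)
      simpa using this
    · refine sub_le_iff_le_add.mpr ?_
      rw [add_comm b (u ⊓ a)]
      exact sub_le_iff_le_add.mp h1
  exact (sub_le_iff_le_add.mp h2).trans_eq (add_comm _ _)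

lemma sup_eq_add {p q : E} (h : p ⊓ q = 0) : p ⊔ q = p + q := by
  have h2 := inf_add_sup p q
  rwa [h, zero_add] at h2

lemma add_inf_eq {p q u : E} (hp : 0 ≤ p) (hq : 0 ≤ q) (hu : 0 ≤ u) (h : p ⊓ q = 0) :
    (p + q) ⊓ u = p ⊓ u + q ⊓ u := by
  refine le_antisymm ?_ ?_
  · rw [inf_comm (p + q) u, inf_comm p u, inf_comm q u]
    exact inf_add_le hu hp hq
  · have hd : (p ⊓ u) ⊓ (q ⊓ u) = 0 :=
      le_antisymm (le_trans (inf_le_inf inf_le_left inf_le_left) h.le)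
        (le_inf (le_inf hp hu) (le_inf hq hu))
    rw [← sup_eq_add hd]
    exact sup_le (le_inf (inf_le_left.trans (le_add_of_nonneg_right hq)) inf_le_right)
      (le_inf (inf_le_left.trans (le_add_of_nonneg_left hp)) inf_le_right)

lemma inf_zero_add {u v w : E} (hu : 0 ≤ u) (hv : 0 ≤ v) (hw : 0 ≤ w)
    (h1 : u ⊓ w = 0) (h2 : v ⊓ w = 0) : (u + v) ⊓ w = 0 := by
  refine le_antisymm ?_ (le_inf (add_nonneg hu hv) hw)
  calc (u + v) ⊓ w = w ⊓ (u + v) := inf_comm _ _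
  _ ≤ w ⊓ u + w ⊓ v := inf_add_le hw hu hv
  _ = 0 := by rw [inf_comm w u, h1, inf_comm w v, h2, add_zero]

lemma posPart_negPart_of_disjoint {u v : E} (hu : 0 ≤ u) (hv : 0 ≤ v) (h : u ⊓ v = 0) :
    (u - v)⁺ = u ∧ (u - v)⁻ = v := by
  have key : ∀ a b : E, 0 ≤ a → 0 ≤ b → a ⊓ b = 0 → (a - b)⁺ = a := by
    intro a b _ _ hab
    have h1 : (a ⊔ b) - b = (a - b) ⊔ 0 := by rw [sup_sub, sub_self]
    rw [posPart_def, ← h1, sup_eq_add hab, add_sub_cancel_right]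
  refine ⟨key u v hu hv h, ?_⟩
  have h2 := key v u hv hu (by rw [inf_comm]; exact h)
  rw [negPart_def, neg_sub, ← posPart_def]
  exact h2

lemma posPart_le_abs' (x : E) : x⁺ ≤ |x| := by
  rw [← posPart_add_negPart x]; exact le_add_of_nonneg_right (negPart_nonneg x)

lemma negPart_le_abs' (x : E) : x⁻ ≤ |x| := by
  rw [← posPart_add_negPart x]; exact le_add_of_nonneg_left (posPart_nonneg x)

lemma disjoint_piece {a b p q : E} (h : |a| ⊓ |b| = 0) (hp : p ≤ |a|) (hq : q ≤ |b|)
    (hp0 : 0 ≤ p) (hq0 : 0 ≤ q) : p ⊓ q = 0 :=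
  le_antisymm (le_trans (inf_le_inf hp hq) h.le) (le_inf hp0 hq0)

lemma posPart_add_of_disjoint {a b : E} (h : |a| ⊓ |b| = 0) :
    (a + b)⁺ = a⁺ + b⁺ ∧ (a + b)⁻ = a⁻ + b⁻ := by
  have hu : 0 ≤ a⁺ + b⁺ := add_nonneg (posPart_nonneg a) (posPart_nonneg b)
  have hv : 0 ≤ a⁻ + b⁻ := add_nonneg (negPart_nonneg a) (negPart_nonneg b)
  have ha1 : a⁻ ⊓ a⁺ = 0 := by rw [inf_comm]; exact posPart_inf_negPart_eq_zero a
  have hb1 : b⁻ ⊓ b⁺ = 0 := by rw [inf_comm]; exact posPart_inf_negPart_eq_zero b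
  have huv : (a⁺ + b⁺) ⊓ (a⁻ + b⁻) = 0 := by
    refine le_antisymm ?_ (le_inf hu hv)
    have h1 : (a⁺ + b⁺) ⊓ a⁻ ≤ 0 := by
      rw [inf_comm]
      calc a⁻ ⊓ (a⁺ + b⁺) ≤ a⁻ ⊓ a⁺ + a⁻ ⊓ b⁺ :=
        inf_add_le (negPart_nonneg a) (posPart_nonneg a) (posPart_nonneg b)
      _ = 0 := by
        rw [ha1, disjoint_piece h (negPart_le_abs' a) (posPart_le_abs' b)
          (negPart_nonneg a) (posPart_nonneg b), add_zero]
    have h2 : (a⁺ + b⁺) ⊓ b⁻ ≤ 0 := by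
      rw [inf_comm]
      calc b⁻ ⊓ (a⁺ + b⁺) ≤ b⁻ ⊓ a⁺ + b⁻ ⊓ b⁺ :=
        inf_add_le (negPart_nonneg b) (posPart_nonneg a) (posPart_nonneg b)
      _ = 0 := by
        rw [hb1, add_zero, inf_comm]
        exact disjoint_piece h (posPart_le_abs' a) (negPart_le_abs' b)
          (posPart_nonneg a) (negPart_nonneg b)
    calc (a⁺ + b⁺) ⊓ (a⁻ + b⁻) ≤ (a⁺ + b⁺) ⊓ a⁻ + (a⁺ + b⁺) ⊓ b⁻ :=
      inf_add_le hu (negPart_nonneg a) (negPart_nonneg b)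
    _ ≤ 0 + 0 := add_le_add h1 h2
    _ = 0 := add_zero 0
  have hab : a + b = (a⁺ + b⁺) - (a⁻ + b⁻) := by
    rw [show (a⁺ + b⁺) - (a⁻ + b⁻) = (a⁺ - a⁻) + (b⁺ - b⁻) by abel,
      posPart_sub_negPart, posPart_sub_negPart]
  obtain ⟨hP, hN⟩ := posPart_negPart_of_disjoint hu hv huv
  rw [← hab] at hP hN
  exact ⟨hP, hN⟩

lemma isFragment_zero' (e : E) : IsFragment (0 : E) e := by
  show |(0 : E)| ⊓ |e - 0| = 0
  rw [abs_zero, sub_zero]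
  exact inf_eq_left.mpr (abs_nonneg e)

lemma isFragment_compl {x e : E} (h : IsFragment x e) : IsFragment (e - x) e := by
  show |e - x| ⊓ |e - (e - x)| = 0
  rw [show e - (e - x) = x by abel, inf_comm]
  exact h

lemma isFragment_pos_iff {x e : E} (he : 0 ≤ e) :
    IsFragment x e ↔ 0 ≤ x ∧ x ≤ e ∧ x ⊓ (e - x) = 0 := by
  constructor
  · intro h
    have h' : |x| ⊓ |e - x| = 0 := h
    obtain ⟨hp, hn⟩ := posPart_add_of_disjoint h'
    have h0 : x + (e - x) = e := by abel
    rw [h0] at hp hn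
    have he' : e⁻ = 0 := negPart_eq_zero.mpr he
    have hx0 : x⁻ = 0 ∧ (e - x)⁻ = 0 :=
      (add_eq_zero_iff_of_nonneg (negPart_nonneg _) (negPart_nonneg _)).mp (by rw [← hn, he'])
    have hx : 0 ≤ x := negPart_eq_zero.mp hx0.1
    have hex : 0 ≤ e - x := negPart_eq_zero.mp hx0.2
    refine ⟨hx, sub_nonneg.mp hex, ?_⟩
    rwa [abs_of_nonneg hx, abs_of_nonneg hex] at h'
  · rintro ⟨hx, hxe, h⟩
    show |x| ⊓ |e - x| = 0
    rwa [abs_of_nonneg hx, abs_of_nonneg (sub_nonneg.mpr hxe)]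

lemma isFragment_parts {x e : E} (h : IsFragment x e) :
    IsFragment x⁺ e⁺ ∧ IsFragment x⁻ e⁻ := by
  have h' : |x| ⊓ |e - x| = 0 := h
  obtain ⟨hp, hn⟩ := posPart_add_of_disjoint h'
  have h0 : x + (e - x) = e := by abel
  rw [h0] at hp hn
  constructor
  · show |x⁺| ⊓ |e⁺ - x⁺| = 0
    have h1 : e⁺ - x⁺ = (e - x)⁺ := by rw [hp]; abel
    rw [h1, abs_of_nonneg (posPart_nonneg _), abs_of_nonneg (posPart_nonneg _)]
    exact disjoint_piece h' (posPart_le_abs' x) (posPart_le_abs' (e - x))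
      (posPart_nonneg _) (posPart_nonneg _)
  · show |x⁻| ⊓ |e⁻ - x⁻| = 0
    have h1 : e⁻ - x⁻ = (e - x)⁻ := by rw [hn]; abel
    rw [h1, abs_of_nonneg (negPart_nonneg _), abs_of_nonneg (negPart_nonneg _)]
    exact disjoint_piece h' (negPart_le_abs' x) (negPart_le_abs' (e - x))
      (negPart_nonneg _) (negPart_nonneg _)

lemma isFragment_inf {r c x : E} (hr : 0 ≤ r) (hc : IsFragment c r) (hx : IsFragment x r) :
    IsFragment (x ⊓ c) c := by
  rw [isFragment_pos_iff hr] at hc hx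
  obtain ⟨hc0, hcr, hcd⟩ := hc
  obtain ⟨hx0, hxr, hxd⟩ := hx
  rw [isFragment_pos_iff hc0]
  refine ⟨le_inf hx0 hc0, inf_le_right, ?_⟩
  have h1 : c - x ⊓ c = (c - x) ⊔ 0 := by rw [sub_inf, sub_self]
  have h2 : (c - x) ⊔ 0 ≤ r - x := sup_le (sub_le_sub_right hcr x) (sub_nonneg.mpr hxr)
  refine le_antisymm ?_ (le_inf (le_inf hx0 hc0) (by rw [h1]; exact le_sup_right))
  calc (x ⊓ c) ⊓ (c - x ⊓ c) ≤ x ⊓ (r - x) :=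
    inf_le_inf inf_le_left (by rw [h1]; exact h2)
  _ = 0 := hxd

lemma isFragment_decomp {r c x : E} (hr : 0 ≤ r) (hc : IsFragment c r) (hx : IsFragment x r) :
    x = x ⊓ c + x ⊓ (r - c) := by
  rw [isFragment_pos_iff hr] at hc hx
  have h1 := add_inf_eq hc.1 (sub_nonneg.mpr hc.2.1) hx.1 hc.2.2
  rw [show c + (r - c) = r by abel] at h1
  rw [inf_comm x c, inf_comm x (r - c), ← h1]
  exact (inf_eq_right.mpr hx.2.1).symm

lemma exists_split {r : E} (hr : 0 ≤ r) (hinf : {x : E | IsFragment x r}.Infinite) :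
    ∃ d r' : E, 0 ≤ d ∧ 0 ≤ r' ∧ d ≠ 0 ∧ d + r' = r ∧ d ⊓ r' = 0 ∧
      {x : E | IsFragment x r'}.Infinite := by
  obtain ⟨c, hcmem⟩ := (hinf.diff (Set.toFinite {0, r})).nonempty
  obtain ⟨hc, hcnot⟩ := hcmem
  have hc0 : c ≠ 0 := fun h => hcnot (by simp [h])
  have hcr : c ≠ r := fun h => hcnot (by simp [h])
  have hcp := (isFragment_pos_iff hr).mp hc
  by_cases hrc : {x : E | IsFragment x (r - c)}.Infinite
  · exact ⟨c, r - c, hcp.1, sub_nonneg.mpr hcp.2.1, hc0, by abel, hcp.2.2, hrc⟩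
  · have hcinf : {x : E | IsFragment x c}.Infinite := by
      intro hcfin
      apply hinf
      have h1 : {x : E | IsFragment x r} ⊆
          (fun p : E × E => p.1 + p.2) '' ({x : E | IsFragment x c} ×ˢ {x : E | IsFragment x (r - c)}) := by
        intro x hx
        exact ⟨(x ⊓ c, x ⊓ (r - c)),
          ⟨isFragment_inf hr hc hx, isFragment_inf hr (isFragment_compl hc) hx⟩,
          (isFragment_decomp hr hc hx).symm⟩
      exact Set.Finite.subset ((hcfin.prod (Set.not_infinite.mp hrc)).image _) h1
    refine ⟨r - c, c, sub_nonneg.mpr hcp.2.1, hcp.1, sub_ne_zero.mpr (Ne.symm hcr), by abel,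
      ?_, hcinf⟩
    rw [inf_comm]
    exact hcp.2.2

lemma nsmul_inf_zero {u w : E} (hu : 0 ≤ u) (hw : 0 ≤ w) (h : u ⊓ w = 0) :
    ∀ n : ℕ, (n • u) ⊓ w = 0
  | 0 => by rw [zero_nsmul]; exact inf_eq_left.mpr hw
  | (n+1) => by
      rw [succ_nsmul]
      exact inf_zero_add (nsmul_nonneg' hu n) hu hw (nsmul_inf_zero hu hw h n) h

lemma sum_inf_zero {ι : Type*} {w : E} (hw : 0 ≤ w) (t : Finset ι) (f : ι → E)
    (h : ∀ i ∈ t, 0 ≤ f i ∧ f i ⊓ w = 0) :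
    0 ≤ ∑ i ∈ t, f i ∧ (∑ i ∈ t, f i) ⊓ w = 0 := by
  induction t using Finset.cons_induction with
  | empty => simpa using inf_eq_left.mpr hw
  | cons a t ha ih =>
      rw [Finset.sum_cons]
      have h1 := h a (Finset.mem_cons_self a t)
      have ih' := ih (fun i hi => h i (Finset.mem_cons_of_mem hi))
      exact ⟨add_nonneg h1.1 ih'.1, inf_zero_add h1.1 ih'.1 hw h1.2 ih'.2⟩

lemma zsmul_le_natAbs_nsmul {x : E} (hx : 0 ≤ x) (m : ℤ) : m • x ≤ m.natAbs • x := by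
  have h1 : ((m.natAbs : ℤ)) • x = m.natAbs • x := natCast_zsmul x m.natAbs
  rw [← h1]
  have h2 : 0 ≤ ((m.natAbs : ℤ) - m) • x := zsmul_nonneg' hx (by omega)
  rw [sub_zsmul, ← sub_eq_add_neg] at h2
  exact sub_nonneg.mp h2

lemma neg_natAbs_nsmul_le {x : E} (hx : 0 ≤ x) (m : ℤ) : -(m.natAbs • x) ≤ m • x := by
  have h2 := zsmul_le_natAbs_nsmul hx (-m)
  rw [neg_zsmul, Int.natAbs_neg] at h2
  exact neg_le.mpr h2

lemma sum_le_sum' {ι : Type*} (t : Finset ι) (f g : ι → E) (h : ∀ i ∈ t, f i ≤ g i) :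
    ∑ i ∈ t, f i ≤ ∑ i ∈ t, g i := by
  induction t using Finset.cons_induction with
  | empty => simp
  | cons a t ha ih =>
      rw [Finset.sum_cons, Finset.sum_cons]
      exact add_le_add (h a (Finset.mem_cons_self a t))
        (ih fun i hi => h i (Finset.mem_cons_of_mem hi))

lemma zsmul_indep {d : ℕ → E} (hd0 : ∀ i, 0 ≤ d i) (hdne : ∀ i, d i ≠ 0)
    (hdis : ∀ i j, i ≠ j → d i ⊓ d j = 0) (t : Finset ℕ) (m : ℕ → ℤ)
    (hsum : ∑ i ∈ t, m i • d i = 0) : ∀ j ∈ t, m j = 0 := by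
  intro j hj
  by_contra hmj
  set W : E := ∑ i ∈ t.erase j, (m i).natAbs • d i with hW
  have hWprops := sum_inf_zero (hd0 j) (t.erase j) (fun i => (m i).natAbs • d i)
    (fun i hi => ⟨nsmul_nonneg' (hd0 i) _,
      nsmul_inf_zero (hd0 i) (hd0 j) (hdis i j (Finset.ne_of_mem_erase hi)) _⟩)
  have hWd : W ⊓ d j = 0 := hWprops.2
  have heq : m j • d j = -∑ i ∈ t.erase j, m i • d i := by
    have h3 := Finset.add_sum_erase t (fun i => m i • d i) hj
    rw [hsum] at h3
    exact eq_neg_of_add_eq_zero_left h3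
  have hle' : -(m j • d j) ≤ W := by
    rw [heq, neg_neg]
    exact le_of_le_of_eq (sum_le_sum' _ _ _ fun i _ => zsmul_le_natAbs_nsmul (hd0 i) (m i)) hW.symm
  have hle : m j • d j ≤ W := by
    rw [heq]
    have h4 : ∑ i ∈ t.erase j, -((m i).natAbs • d i) ≤ ∑ i ∈ t.erase j, m i • d i :=
      sum_le_sum' _ _ _ fun i _ => neg_natAbs_nsmul_le (hd0 i) (m i)
    have h5 : -W = ∑ i ∈ t.erase j, -((m i).natAbs • d i) := by
      rw [hW, ← Finset.sum_neg_distrib]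
    rw [neg_le, h5]
    exact h4
  have hnat : (m j).natAbs • d j ≤ W := by
    rcases lt_or_gt_of_ne hmj with hneg | hpos
    · calc (m j).natAbs • d j = ((m j).natAbs : ℤ) • d j := (natCast_zsmul _ _).symm
      _ = (-(m j)) • d j := by rw [show ((m j).natAbs : ℤ) = -(m j) by omega]
      _ = -(m j • d j) := neg_zsmul _ _
      _ ≤ W := hle'
    · calc (m j).natAbs • d j = ((m j).natAbs : ℤ) • d j := (natCast_zsmul _ _).symm
      _ = (m j) • d j := by rw [show ((m j).natAbs : ℤ) = m j by omega]
      _ ≤ W := hle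
  have hdj_le : d j ≤ (m j).natAbs • d j := by
    have h6 : ((m j).natAbs - 1) • d j + 1 • d j = (m j).natAbs • d j := by
      rw [← add_nsmul, Nat.sub_add_cancel (by omega : 1 ≤ (m j).natAbs)]
    rw [← h6, one_nsmul]
    exact le_add_of_nonneg_left (nsmul_nonneg' (hd0 j) _)
  have hdj0 : d j = 0 := by
    have h7 : d j ⊓ W = d j := inf_eq_left.mpr (hdj_le.trans hnat)
    rw [inf_comm] at hWd
    exact h7.symm.trans hWd
  exact hdne j hdj0

end OAOHelper

variable {E F : Type*}
  [Lattice E] [AddCommGroup E] [CovariantClass E E (· + ·) (· ≤ ·)]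
  [Lattice F] [AddCommGroup F] [CovariantClass F F (· + ·) (· ≤ ·)]

open OAOHelper in
/-- Characterization: every OAO from `E` to an Archimedean `F` is laterally-to-order
bounded iff `F = {0}` or every element of `E` has only finitely many fragments. -/
theorem every_oao_laterally_to_order_bounded_iff
    [Module ℝ E] [Module ℝ F]
    (hArch : ∀ x y : F, 0 ≤ x → (∀ n : ℕ, n • x ≤ y) → x = 0) :
    (∀ T : E → F, IsOAO T →
      ∀ e : E, ∃ a b : F, ∀ x : E, IsFragment x e → a ≤ T x ∧ T x ≤ b) ↔
    ((∀ f : F, f = 0) ∨ ∀ e : E, {x : E | IsFragment x e}.Finite) := by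
  classical
  constructor
  · intro hlr
    by_contra hcon
    push_neg at hcon
    obtain ⟨hFne, hEinf⟩ := hcon
    obtain ⟨f, hf⟩ := hFne
    obtain ⟨e, he⟩ := hEinf
    have heInf : {x : E | IsFragment x e}.Infinite := he
    -- reduce to a positive element with infinitely many fragments
    have hpos : ∃ e₀ : E, 0 ≤ e₀ ∧ {x : E | IsFragment x e₀}.Infinite := by
      by_cases hp : {x : E | IsFragment x e⁺}.Infinite
      · exact ⟨e⁺, posPart_nonneg e, hp⟩
      by_cases hn : {x : E | IsFragment x e⁻}.Infinite
      · exact ⟨e⁻, negPart_nonneg e, hn⟩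
      exfalso
      apply heInf
      have hsub : {x : E | IsFragment x e} ⊆
          (fun p : E × E => p.1 - p.2) ''
            ({x : E | IsFragment x e⁺} ×ˢ {x : E | IsFragment x e⁻}) := by
        intro x hx
        exact ⟨(x⁺, x⁻), ⟨(isFragment_parts hx).1, (isFragment_parts hx).2⟩,
          posPart_sub_negPart x⟩
      exact Set.Finite.subset (((Set.not_infinite.mp hp).prod (Set.not_infinite.mp hn)).image _)
        hsub
    obtain ⟨e₀, he₀, hinf₀⟩ := hpos
    -- recursively split off disjoint nonzero fragments
    have hsplit : ∀ r : {r : E // 0 ≤ r ∧ {x : E | IsFragment x r}.Infinite}, ∃ p : E × E,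
        0 ≤ p.1 ∧ p.1 ≠ 0 ∧ p.1 + p.2 = r.1 ∧ p.1 ⊓ p.2 = 0 ∧
          (0 ≤ p.2 ∧ {x : E | IsFragment x p.2}.Infinite) := by
      rintro ⟨r, hr0, hrinf⟩
      obtain ⟨dd, rr, h1, h2, h3, h4, h5, h6⟩ := exists_split hr0 hrinf
      exact ⟨(dd, rr), h1, h3, h4, h5, h2, h6⟩
    choose P hP using hsplit
    let R : ℕ → {r : E // 0 ≤ r ∧ {x : E | IsFragment x r}.Infinite} := fun n =>
      Nat.rec ⟨e₀, he₀, hinf₀⟩ (fun _ q => ⟨(P q).2, (hP q).2.2.2.2⟩) n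
    let d : ℕ → E := fun n => (P (R n)).1
    let rc : ℕ → E := fun n => (R n).1
    have hrc0 : rc 0 = e₀ := rfl
    have hrcS : ∀ n, rc (n + 1) = (P (R n)).2 := fun n => rfl
    have hd0 : ∀ n, 0 ≤ d n := fun n => (hP (R n)).1
    have hdne : ∀ n, d n ≠ 0 := fun n => (hP (R n)).2.1
    have hdsum : ∀ n, d n + rc (n + 1) = rc n := fun n => by
      rw [hrcS n]; exact (hP (R n)).2.2.1
    have hddis : ∀ n, d n ⊓ rc (n + 1) = 0 := fun n => by
      rw [hrcS n]; exact (hP (R n)).2.2.2.1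
    have hrcpos : ∀ n, 0 ≤ rc n := fun n => (R n).2.1
    have hdle : ∀ n, d n ≤ rc n := fun n => by
      rw [← hdsum n]; exact le_add_of_nonneg_right (hrcpos (n + 1))
    have hrcmono : Antitone rc := antitone_nat_of_succ_le fun n => by
      rw [← hdsum n]; exact le_add_of_nonneg_left (hd0 n)
    have hpair : ∀ i j, i < j → d i ⊓ d j = 0 := by
      intro i j hij
      have h1 : d j ≤ rc (i + 1) := (hdle j).trans (hrcmono hij)
      exact le_antisymm (le_trans (inf_le_inf (le_refl (d i)) h1) (hddis i).le)
        (le_inf (hd0 i) (hd0 j))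
    have hdis : ∀ i j, i ≠ j → d i ⊓ d j = 0 := by
      intro i j hij
      rcases hij.lt_or_gt with h | h
      · exact hpair i j h
      · rw [inf_comm]; exact hpair j i h
    -- partial sums are fragments of e₀
    let ps : ℕ → E := fun n => ∑ k ∈ Finset.range n, d k
    have hpsinv : ∀ n, 0 ≤ ps n ∧ ps n + rc n = e₀ ∧ ps n ⊓ rc n = 0 := by
      intro n
      induction n with
      | zero =>
          refine ⟨le_of_eq ?_, ?_, ?_⟩
          · exact (Finset.sum_range_zero d).symm
          · show (∑ k ∈ Finset.range 0, d k) + rc 0 = e₀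
            rw [Finset.sum_range_zero, zero_add, hrc0]
          · show (∑ k ∈ Finset.range 0, d k) ⊓ rc 0 = 0
            rw [Finset.sum_range_zero]
            exact inf_eq_left.mpr (hrcpos 0)
      | succ n ih =>
          obtain ⟨ih0, ihsum, ihdisj⟩ := ih
          have hs : ps (n + 1) = ps n + d n := Finset.sum_range_succ d n
          have hsd : ps n ⊓ d n = 0 :=
            le_antisymm (le_trans (inf_le_inf (le_refl (ps n)) (hdle n)) ihdisj.le)
              (le_inf ih0 (hd0 n))
          refine ⟨?_, ?_, ?_⟩
          · rw [hs]; exact add_nonneg ih0 (hd0 n)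
          · rw [hs, add_assoc, hdsum n, ihsum]
          · rw [hs, add_inf_eq ih0 (hd0 n) (hrcpos (n + 1)) hsd, hddis n, add_zero]
            exact le_antisymm
              (le_trans (inf_le_inf (le_refl (ps n)) (hrcmono (Nat.le_succ n))) ihdisj.le)
              (le_inf ih0 (hrcpos (n + 1)))
    have hpsfrag : ∀ n, IsFragment (ps n) e₀ := by
      intro n
      obtain ⟨h0, hsum, hdisj⟩ := hpsinv n
      rw [isFragment_pos_iff he₀]
      refine ⟨h0, ?_, ?_⟩
      · rw [← hsum]; exact le_add_of_nonneg_right (hrcpos n)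
      · rw [show e₀ - ps n = rc n by rw [← hsum]; abel]
        exact hdisj
    -- rational module structure and linear independence
    letI : Module ℚ E := Module.compHom E (Rat.castHom ℝ)
    have hind : LinearIndependent ℚ d := by
      rw [linearIndependent_iff']
      intro t g hg j hj
      by_contra hgj
      set Dq : ℚ := ∏ i ∈ t, ((g i).den : ℚ) with hDq
      have hqden : ∀ q : ℚ, q * (q.den : ℚ) = (q.num : ℚ) := by
        intro q
        nth_rewrite 1 [← Rat.num_div_den q]
        rw [div_mul_cancel₀]
        exact Nat.cast_ne_zero.mpr q.den_ne_zero
      set m : ℕ → ℤ := fun i => (g i).num * ∏ k ∈ t.erase i, ((g k).den : ℤ) with hm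
      have hmq : ∀ i ∈ t, (m i : ℚ) = g i * Dq := by
        intro i hi
        rw [hm, hDq]
        push_cast
        rw [← Finset.mul_prod_erase t (fun k => ((g k).den : ℚ)) hi, ← mul_assoc,
          hqden (g i)]
      have hgz : ∑ i ∈ t, m i • d i = 0 := by
        have h0 : ∑ i ∈ t, (g i * Dq) • d i = 0 := by
          have h1 : ∑ i ∈ t, (g i * Dq) • d i = Dq • ∑ i ∈ t, g i • d i := by
            rw [Finset.smul_sum]
            refine Finset.sum_congr rfl fun i _ => ?_
            rw [smul_smul, mul_comm]
          rw [h1, hg, smul_zero]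
        calc ∑ i ∈ t, m i • d i = ∑ i ∈ t, ((m i : ℚ)) • d i :=
          Finset.sum_congr rfl fun i _ => (Int.cast_smul_eq_zsmul ℚ (m i) (d i)).symm
        _ = ∑ i ∈ t, (g i * Dq) • d i :=
          Finset.sum_congr rfl fun i hi => by rw [hmq i hi]
        _ = 0 := h0
      have hmj := zsmul_indep hd0 hdne hdis t m hgz j hj
      apply hgj
      rw [hm] at hmj
      rcases mul_eq_zero.mp hmj with h | h
      · exact Rat.zero_of_num_zero h
      · exfalso
        exact (Finset.prod_ne_zero_iff.mpr fun k _ =>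
          Int.natCast_ne_zero.mpr (g k).den_ne_zero) h
    -- build a linear functional equal to 1 on each d k
    have hsr := hind.linearIndepOn_id
    let bE := Module.Basis.extend hsr
    let ℓ : E →ₗ[ℚ] ℚ :=
      (Module.Basis.extend hsr).constr ℚ (fun i => if (i : E) ∈ Set.range d then (1 : ℚ) else 0)
    have hℓd : ∀ k, ℓ (d k) = 1 := by
      intro k
      have hmem : d k ∈ hsr.extend (Set.subset_univ (Set.range d)) :=
        hsr.subset_extend _ ⟨k, rfl⟩
      have h1 : (Module.Basis.extend hsr) ⟨d k, hmem⟩ = d k := Module.Basis.extend_apply_self hsr ⟨d k, hmem⟩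
      show ((Module.Basis.extend hsr).constr ℚ
        (fun i => if (i : E) ∈ Set.range d then (1 : ℚ) else 0)) (d k) = 1
      rw [← h1, Module.Basis.constr_basis]
      exact if_pos ⟨k, rfl⟩
    have hℓs : ∀ n, ℓ (ps n) = n := by
      intro n
      show ℓ (∑ k ∈ Finset.range n, d k) = n
      rw [map_sum]
      rw [Finset.sum_congr rfl fun k _ => hℓd k]
      simp
    -- the unbounded OAO
    let T : E → F := fun x => ((ℓ x : ℚ) : ℝ) • |f|
    have hTO : IsOAO T := by
      intro x y _
      show ((ℓ (x + y) : ℚ) : ℝ) • |f| = ((ℓ x : ℚ) : ℝ) • |f| + ((ℓ y : ℚ) : ℝ) • |f|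
      rw [map_add]
      push_cast
      rw [add_smul]
    obtain ⟨a, b, hab⟩ := hlr T hTO e₀
    have hnb : ∀ n : ℕ, n • |f| ≤ b := by
      intro n
      have h1 := (hab (ps n) (hpsfrag n)).2
      have h2 : T (ps n) = (n : ℝ) • |f| := by
        show ((ℓ (ps n) : ℚ) : ℝ) • |f| = (n : ℝ) • |f|
        rw [hℓs n]
        norm_cast
        exact Nat.cast_smul_eq_nsmul ℝ n |f|
      rw [h2, Nat.cast_smul_eq_nsmul] at h1
      exact h1
    have h0 : |f| = 0 := hArch |f| b (abs_nonneg f) hnb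
    have h1 : f ≤ 0 := (le_abs_self f).trans_eq h0
    have h2 : -f ≤ 0 := (neg_le_abs f).trans_eq h0
    exact hf (le_antisymm h1 (neg_nonpos.mp h2))
  · rintro (hF | hFin)
    · intro T _ e
      refine ⟨0, 0, fun x _ => ?_⟩
      rw [hF (T x)]
      exact ⟨le_refl 0, le_refl 0⟩
    · intro T _ e
      have hfe := hFin e
      have hne : hfe.toFinset.Nonempty :=
        ⟨0, by rw [Set.Finite.mem_toFinset]; exact isFragment_zero' e⟩
      refine ⟨hfe.toFinset.inf' hne T, hfe.toFinset.sup' hne T, fun x hx => ?_⟩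
      have hxm : x ∈ hfe.toFinset := by rw [Set.Finite.mem_toFinset]; exact hx
      exact ⟨Finset.inf'_le T hxm, Finset.le_sup' T hxm⟩
end

section
/- Let $E, F$ be Riesz spaces and $S, T : E \to F$ orthogonally additive operators. Suppose that for every $x \in E$ the supremum $R(x) = \sup\{S(u) + T(v) : x = u \sqcup v\}$ exists in $F$, where the supremum is over all decompositions of $x$ into two disjoint summands. Then $R$ is an orthogonally additive operator and $R$ is the supremum $S \vee T$ of $S$ and $T$ in the ordered vector space $\mathcal{O}(E,F)$ of all orthogonally additive operators (ordered by $S \le T$ iff $T(x) - S(x) \ge 0$ for all $x$). -/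
section Aux

variable {α : Type*} [Lattice α] [AddCommGroup α] [CovariantClass α α (· + ·) (· ≤ ·)]

/-- monotone shrinking of disjointness -/
lemma inf_zero_mono_s11 {a b a' b' : α} (ha0 : 0 ≤ a) (hb0 : 0 ≤ b) (ha : a ≤ a') (hb : b ≤ b')
    (h : a' ⊓ b' = 0) : a ⊓ b = 0 :=
  le_antisymm ((inf_le_inf ha hb).trans_eq h) (le_inf ha0 hb0)

/-- disjoint nonneg elements: sum = sup -/
lemma add_eq_sup_of_disj {a b : α} (ha : 0 ≤ a) (hb : 0 ≤ b) (h : a ⊓ b = 0) :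
    a + b = a ⊔ b := by
  have := inf_add_sup a b
  rw [h, zero_add] at this
  exact this.symm

/-- distributivity of inf over disjoint nonneg sums -/
lemma inf_add_of_disj_s11 {c a b : α} (hc : 0 ≤ c) (ha : 0 ≤ a) (hb : 0 ≤ b) (h : a ⊓ b = 0) :
    c ⊓ (a + b) = c ⊓ a + c ⊓ b := by
  letI : DistribLattice α := AddCommGroup.toDistribLattice α
  have h1 : c ⊓ (a + b) = (c ⊓ a) ⊔ (c ⊓ b) := by
    rw [add_eq_sup_of_disj ha hb h]; exact inf_sup_left c a b
  have h2 : (c ⊓ a) ⊓ (c ⊓ b) = 0 :=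
    inf_zero_mono_s11 (le_inf hc ha) (le_inf hc hb) inf_le_right inf_le_right h
  rw [h1, ← add_eq_sup_of_disj (le_inf hc ha) (le_inf hc hb) h2]

/-- disjointness of sums of pairwise-disjoint nonneg elements -/
lemma add_inf_add_eq_zero {a b c d : α} (ha : 0 ≤ a) (hb : 0 ≤ b) (hc : 0 ≤ c) (hd : 0 ≤ d)
    (hab : a ⊓ b = 0) (hcd : c ⊓ d = 0)
    (hac : a ⊓ c = 0) (had : a ⊓ d = 0) (hbc : b ⊓ c = 0) (hbd : b ⊓ d = 0) :
    (a + b) ⊓ (c + d) = 0 := by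
  have habnn : 0 ≤ a + b := add_nonneg ha hb
  rw [inf_add_of_disj_s11 habnn hc hd hcd]
  rw [inf_comm (a + b) c, inf_comm (a + b) d]
  rw [inf_add_of_disj_s11 hc ha hb hab, inf_add_of_disj_s11 hd ha hb hab]
  rw [inf_comm c a, inf_comm c b, inf_comm d a, inf_comm d b, hac, hbc, had, hbd]
  simp

/-- pos/neg parts of a difference of disjoint nonneg elements -/
lemma posPart_of_disj {p q : α} (hp : 0 ≤ p) (hq : 0 ≤ q) (h : p ⊓ q = 0) :
    (p - q)⁺ = p ∧ (p - q)⁻ = q := by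
  have hsup : (p - q) ⊔ 0 = (p ⊔ q) - q := by
    rw [sup_sub, sub_self]
  have hpq : p ⊔ q = p + q := (add_eq_sup_of_disj hp hq h).symm
  have hpos : (p - q)⁺ = p := by
    rw [posPart_def, hsup, hpq, add_sub_cancel_right]
  refine ⟨hpos, ?_⟩
  have h3 := posPart_sub_negPart (p - q)
  rw [hpos] at h3
  have h4 : p - (p - q)⁻ = p - q := h3
  have h5 : (p - q)⁻ = q := by
    have := sub_right_injective h4
    simpa using this
  exact h5

lemma rdisjoint_parts {a b : α} (h : RDisjoint a b) :
    a⁺ ⊓ b⁺ = 0 ∧ a⁺ ⊓ b⁻ = 0 ∧ a⁻ ⊓ b⁺ = 0 ∧ a⁻ ⊓ b⁻ = 0 := by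
  have hpa : a⁺ ≤ |a| := by
    rw [← posPart_add_negPart a]; exact le_add_of_nonneg_right (negPart_nonneg a)
  have hna : a⁻ ≤ |a| := by
    rw [← posPart_add_negPart a]; exact le_add_of_nonneg_left (posPart_nonneg a)
  have hpb : b⁺ ≤ |b| := by
    rw [← posPart_add_negPart b]; exact le_add_of_nonneg_right (negPart_nonneg b)
  have hnb : b⁻ ≤ |b| := by
    rw [← posPart_add_negPart b]; exact le_add_of_nonneg_left (posPart_nonneg b)
  exact ⟨inf_zero_mono_s11 (posPart_nonneg a) (posPart_nonneg b) hpa hpb h,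
    inf_zero_mono_s11 (posPart_nonneg a) (negPart_nonneg b) hpa hnb h,
    inf_zero_mono_s11 (negPart_nonneg a) (posPart_nonneg b) hna hpb h,
    inf_zero_mono_s11 (negPart_nonneg a) (negPart_nonneg b) hna hnb h⟩

/-- pos part of disjoint sum -/
lemma parts_of_disj_add {a b : α} (h : RDisjoint a b) :
    (a + b)⁺ = a⁺ + b⁺ ∧ (a + b)⁻ = a⁻ + b⁻ := by
  obtain ⟨hpp, hpn, hnp, hnn⟩ := rdisjoint_parts h
  have hP : 0 ≤ a⁺ + b⁺ := add_nonneg (posPart_nonneg a) (posPart_nonneg b)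
  have hN : 0 ≤ a⁻ + b⁻ := add_nonneg (negPart_nonneg a) (negPart_nonneg b)
  have hPN : (a⁺ + b⁺) ⊓ (a⁻ + b⁻) = 0 :=
    add_inf_add_eq_zero (posPart_nonneg a) (posPart_nonneg b) (negPart_nonneg a)
      (negPart_nonneg b) hpp hnn (posPart_inf_negPart_eq_zero a) hpn
      (inf_comm a⁻ b⁺ ▸ hnp) (posPart_inf_negPart_eq_zero b)
  have heq : a + b = (a⁺ + b⁺) - (a⁻ + b⁻) := by
    rw [← sub_add_sub_comm, posPart_sub_negPart, posPart_sub_negPart]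
  obtain ⟨h1, h2⟩ := posPart_of_disj hP hN hPN
  rw [heq]; exact ⟨h1, h2⟩

/-- abs of disjoint sum -/
lemma abs_add_of_disj {a b : α} (h : RDisjoint a b) : |a + b| = |a| + |b| := by
  obtain ⟨h1, h2⟩ := parts_of_disj_add h
  rw [← posPart_add_negPart (a + b), h1, h2, ← posPart_add_negPart a, ← posPart_add_negPart b]
  abel

lemma abs_le_of_disj_add {a b : α} (h : RDisjoint a b) : |a| ≤ |a + b| := by
  rw [abs_add_of_disj h]; exact le_add_of_nonneg_right (abs_nonneg b)

lemma rdisjoint_mono {a b x y : α} (hax : |a| ≤ |x|) (hby : |b| ≤ |y|)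
    (h : RDisjoint x y) : RDisjoint a b :=
  inf_zero_mono_s11 (abs_nonneg a) (abs_nonneg b) hax hby h

/-- The key splitting lemma: a disjoint decomposition of `x + y` (with `x ⊥ y`)
splits into disjoint decompositions of `x` and of `y`. -/
lemma split_decomp {x y u v : α} (hxy : RDisjoint x y) (huv : RDisjoint u v)
    (he : x + y = u + v) :
    ∃ u₁ u₂ v₁ v₂ : α, RDisjoint u₁ u₂ ∧ RDisjoint v₁ v₂ ∧ RDisjoint u₁ v₁ ∧
      RDisjoint u₂ v₂ ∧ u = u₁ + u₂ ∧ v = v₁ + v₂ ∧ x = u₁ + v₁ ∧ y = u₂ + v₂ := by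
  obtain ⟨hxypp, hxypn, hxynp, hxynn⟩ := rdisjoint_parts hxy
  obtain ⟨huvpp, huvpn, huvnp, huvnn⟩ := rdisjoint_parts huv
  obtain ⟨hxyP, hxyN⟩ := parts_of_disj_add hxy
  obtain ⟨huvP, huvN⟩ := parts_of_disj_add huv
  have hEP : x⁺ + y⁺ = u⁺ + v⁺ := by rw [← hxyP, ← huvP, he]
  have hEN : x⁻ + y⁻ = u⁻ + v⁻ := by rw [← hxyN, ← huvN, he]
  -- abbreviations
  set a1 := u⁺ ⊓ x⁺ with ha1
  set a2 := u⁻ ⊓ x⁻ with ha2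
  set b1 := u⁺ ⊓ y⁺ with hb1
  set b2 := u⁻ ⊓ y⁻ with hb2
  set c1 := v⁺ ⊓ x⁺ with hc1
  set c2 := v⁻ ⊓ x⁻ with hc2
  set d1 := v⁺ ⊓ y⁺ with hd1
  set d2 := v⁻ ⊓ y⁻ with hd2
  refine ⟨a1 - a2, b1 - b2, c1 - c2, d1 - d2, ?_, ?_, ?_, ?_, ?_, ?_, ?_, ?_⟩
  -- nonnegativity helpers
  all_goals {
    have Ha1 : (0:α) ≤ a1 := le_inf (posPart_nonneg u) (posPart_nonneg x)
    have Ha2 : (0:α) ≤ a2 := le_inf (negPart_nonneg u) (negPart_nonneg x)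
    have Hb1 : (0:α) ≤ b1 := le_inf (posPart_nonneg u) (posPart_nonneg y)
    have Hb2 : (0:α) ≤ b2 := le_inf (negPart_nonneg u) (negPart_nonneg y)
    have Hc1 : (0:α) ≤ c1 := le_inf (posPart_nonneg v) (posPart_nonneg x)
    have Hc2 : (0:α) ≤ c2 := le_inf (negPart_nonneg v) (negPart_nonneg x)
    have Hd1 : (0:α) ≤ d1 := le_inf (posPart_nonneg v) (posPart_nonneg y)
    have Hd2 : (0:α) ≤ d2 := le_inf (negPart_nonneg v) (negPart_nonneg y)
    -- internal disjointness of each pair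
    have Da : a1 ⊓ a2 = 0 :=
      inf_zero_mono_s11 Ha1 Ha2 inf_le_left inf_le_left (posPart_inf_negPart_eq_zero u)
    have Db : b1 ⊓ b2 = 0 :=
      inf_zero_mono_s11 Hb1 Hb2 inf_le_left inf_le_left (posPart_inf_negPart_eq_zero u)
    have Dc : c1 ⊓ c2 = 0 :=
      inf_zero_mono_s11 Hc1 Hc2 inf_le_left inf_le_left (posPart_inf_negPart_eq_zero v)
    have Dd : d1 ⊓ d2 = 0 :=
      inf_zero_mono_s11 Hd1 Hd2 inf_le_left inf_le_left (posPart_inf_negPart_eq_zero v)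
    -- abs values
    have Aa : |a1 - a2| = a1 + a2 := by
      obtain ⟨h1, h2⟩ := posPart_of_disj Ha1 Ha2 Da
      rw [← posPart_add_negPart (a1 - a2), h1, h2]
    have Ab : |b1 - b2| = b1 + b2 := by
      obtain ⟨h1, h2⟩ := posPart_of_disj Hb1 Hb2 Db
      rw [← posPart_add_negPart (b1 - b2), h1, h2]
    have Ac : |c1 - c2| = c1 + c2 := by
      obtain ⟨h1, h2⟩ := posPart_of_disj Hc1 Hc2 Dc
      rw [← posPart_add_negPart (c1 - c2), h1, h2]
    have Ad : |d1 - d2| = d1 + d2 := by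
      obtain ⟨h1, h2⟩ := posPart_of_disj Hd1 Hd2 Dd
      rw [← posPart_add_negPart (d1 - d2), h1, h2]
    -- decompositions of pos/neg parts
    have Hup : u⁺ = a1 + b1 := by
      have hle : u⁺ ≤ x⁺ + y⁺ := hEP ▸ le_add_of_nonneg_right (posPart_nonneg v)
      have : u⁺ ⊓ (x⁺ + y⁺) = u⁺ := inf_eq_left.2 hle
      rw [← this, inf_add_of_disj_s11 (posPart_nonneg u) (posPart_nonneg x)
        (posPart_nonneg y) hxypp]
    have Hun : u⁻ = a2 + b2 := by
      have hle : u⁻ ≤ x⁻ + y⁻ := hEN ▸ le_add_of_nonneg_right (negPart_nonneg v)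
      have : u⁻ ⊓ (x⁻ + y⁻) = u⁻ := inf_eq_left.2 hle
      rw [← this, inf_add_of_disj_s11 (negPart_nonneg u) (negPart_nonneg x)
        (negPart_nonneg y) hxynn]
    have Hvp : v⁺ = c1 + d1 := by
      have hle : v⁺ ≤ x⁺ + y⁺ := hEP ▸ le_add_of_nonneg_left (posPart_nonneg u)
      have : v⁺ ⊓ (x⁺ + y⁺) = v⁺ := inf_eq_left.2 hle
      rw [← this, inf_add_of_disj_s11 (posPart_nonneg v) (posPart_nonneg x)
        (posPart_nonneg y) hxypp]
    have Hvn : v⁻ = c2 + d2 := by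
      have hle : v⁻ ≤ x⁻ + y⁻ := hEN ▸ le_add_of_nonneg_left (negPart_nonneg u)
      have : v⁻ ⊓ (x⁻ + y⁻) = v⁻ := inf_eq_left.2 hle
      rw [← this, inf_add_of_disj_s11 (negPart_nonneg v) (negPart_nonneg x)
        (negPart_nonneg y) hxynn]
    have Hxp : x⁺ = a1 + c1 := by
      have hle : x⁺ ≤ u⁺ + v⁺ := hEP ▸ le_add_of_nonneg_right (posPart_nonneg y)
      have h0 : x⁺ ⊓ (u⁺ + v⁺) = x⁺ := inf_eq_left.2 hle
      rw [← h0, inf_add_of_disj_s11 (posPart_nonneg x) (posPart_nonneg u)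
        (posPart_nonneg v) huvpp, inf_comm x⁺ u⁺, inf_comm x⁺ v⁺]
    have Hxn : x⁻ = a2 + c2 := by
      have hle : x⁻ ≤ u⁻ + v⁻ := hEN ▸ le_add_of_nonneg_right (negPart_nonneg y)
      have h0 : x⁻ ⊓ (u⁻ + v⁻) = x⁻ := inf_eq_left.2 hle
      rw [← h0, inf_add_of_disj_s11 (negPart_nonneg x) (negPart_nonneg u)
        (negPart_nonneg v) huvnn, inf_comm x⁻ u⁻, inf_comm x⁻ v⁻]
    have Hyp : y⁺ = b1 + d1 := by
      have hle : y⁺ ≤ u⁺ + v⁺ := hEP ▸ le_add_of_nonneg_left (posPart_nonneg x)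
      have h0 : y⁺ ⊓ (u⁺ + v⁺) = y⁺ := inf_eq_left.2 hle
      rw [← h0, inf_add_of_disj_s11 (posPart_nonneg y) (posPart_nonneg u)
        (posPart_nonneg v) huvpp, inf_comm y⁺ u⁺, inf_comm y⁺ v⁺]
    have Hyn : y⁻ = b2 + d2 := by
      have hle : y⁻ ≤ u⁻ + v⁻ := hEN ▸ le_add_of_nonneg_left (negPart_nonneg x)
      have h0 : y⁻ ⊓ (u⁻ + v⁻) = y⁻ := inf_eq_left.2 hle
      rw [← h0, inf_add_of_disj_s11 (negPart_nonneg y) (negPart_nonneg u)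
        (negPart_nonneg v) huvnn, inf_comm y⁻ u⁻, inf_comm y⁻ v⁻]
    first
    | -- RDisjoint (a1 - a2) (b1 - b2)
      (show RDisjoint (a1 - a2) (b1 - b2)
       unfold RDisjoint
       rw [Aa, Ab]
       exact add_inf_add_eq_zero Ha1 Ha2 Hb1 Hb2 Da Db
         (inf_zero_mono_s11 Ha1 Hb1 inf_le_right inf_le_right hxypp)
         (inf_zero_mono_s11 Ha1 Hb2 inf_le_left inf_le_left (posPart_inf_negPart_eq_zero u))
         (inf_zero_mono_s11 Ha2 Hb1 inf_le_left inf_le_left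
           (by rw [inf_comm]; exact posPart_inf_negPart_eq_zero u))
         (inf_zero_mono_s11 Ha2 Hb2 inf_le_right inf_le_right hxynn))
    | -- RDisjoint (c1 - c2) (d1 - d2)
      (show RDisjoint (c1 - c2) (d1 - d2)
       unfold RDisjoint
       rw [Ac, Ad]
       exact add_inf_add_eq_zero Hc1 Hc2 Hd1 Hd2 Dc Dd
         (inf_zero_mono_s11 Hc1 Hd1 inf_le_right inf_le_right hxypp)
         (inf_zero_mono_s11 Hc1 Hd2 inf_le_left inf_le_left (posPart_inf_negPart_eq_zero v))
         (inf_zero_mono_s11 Hc2 Hd1 inf_le_left inf_le_left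
           (by rw [inf_comm]; exact posPart_inf_negPart_eq_zero v))
         (inf_zero_mono_s11 Hc2 Hd2 inf_le_right inf_le_right hxynn))
    | -- RDisjoint (a1 - a2) (c1 - c2)
      (show RDisjoint (a1 - a2) (c1 - c2)
       unfold RDisjoint
       rw [Aa, Ac]
       exact add_inf_add_eq_zero Ha1 Ha2 Hc1 Hc2 Da Dc
         (inf_zero_mono_s11 Ha1 Hc1 inf_le_left inf_le_left huvpp)
         (inf_zero_mono_s11 Ha1 Hc2 inf_le_right inf_le_right (posPart_inf_negPart_eq_zero x))
         (inf_zero_mono_s11 Ha2 Hc1 inf_le_right inf_le_right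
           (by rw [inf_comm]; exact posPart_inf_negPart_eq_zero x))
         (inf_zero_mono_s11 Ha2 Hc2 inf_le_left inf_le_left huvnn))
    | -- RDisjoint (b1 - b2) (d1 - d2)
      (show RDisjoint (b1 - b2) (d1 - d2)
       unfold RDisjoint
       rw [Ab, Ad]
       exact add_inf_add_eq_zero Hb1 Hb2 Hd1 Hd2 Db Dd
         (inf_zero_mono_s11 Hb1 Hd1 inf_le_left inf_le_left huvpp)
         (inf_zero_mono_s11 Hb1 Hd2 inf_le_right inf_le_right (posPart_inf_negPart_eq_zero y))
         (inf_zero_mono_s11 Hb2 Hd1 inf_le_right inf_le_right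
           (by rw [inf_comm]; exact posPart_inf_negPart_eq_zero y))
         (inf_zero_mono_s11 Hb2 Hd2 inf_le_left inf_le_left huvnn))
    | -- u = (a1 - a2) + (b1 - b2)
      (show u = (a1 - a2) + (b1 - b2)
       rw [← posPart_sub_negPart u, Hup, Hun]; abel)
    | -- v = (c1 - c2) + (d1 - d2)
      (show v = (c1 - c2) + (d1 - d2)
       rw [← posPart_sub_negPart v, Hvp, Hvn]; abel)
    | -- x = (a1 - a2) + (c1 - c2)
      (show x = (a1 - a2) + (c1 - c2)
       rw [← posPart_sub_negPart x, Hxp, Hxn]; abel)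
    | -- y = (b1 - b2) + (d1 - d2)
      (show y = (b1 - b2) + (d1 - d2)
       rw [← posPart_sub_negPart y, Hyp, Hyn]; abel)
  }

lemma rdisjoint_comm {a b : α} (h : RDisjoint a b) : RDisjoint b a := by
  unfold RDisjoint at h ⊢; rwa [inf_comm]

lemma rdisjoint_zero (a : α) : RDisjoint a 0 := by
  unfold RDisjoint
  simp [inf_eq_right.2 (abs_nonneg a)]

end Aux

variable {E F : Type*}
  [Lattice E] [AddCommGroup E] [CovariantClass E E (· + ·) (· ≤ ·)]
  [Lattice F] [AddCommGroup F] [CovariantClass F F (· + ·) (· ≤ ·)]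

lemma oao_zero {S : E → F} (hS : IsOAO S) : S 0 = 0 := by
  have := hS 0 0 (rdisjoint_zero 0)
  rw [add_zero] at this
  exact (left_eq_add.1 this)

/-- If the pointwise supremum formula exists, it defines the join `S ∨ T` of two OAOs
in the ordered vector space of all OAOs. -/
theorem oao_sup_exists (S T : E → F) (hS : IsOAO S) (hT : IsOAO T) (R : E → F)
    (hR : ∀ x : E,
      IsLUB {z : F | ∃ u v : E, RDisjoint u v ∧ x = u + v ∧ z = S u + T v} (R x)) :
    IsOAO R ∧ (∀ x, S x ≤ R x) ∧ (∀ x, T x ≤ R x) ∧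
    ∀ P : E → F, IsOAO P → (∀ x, S x ≤ P x) → (∀ x, T x ≤ P x) → ∀ x, R x ≤ P x := by
  have hSmem : ∀ x : E, S x ∈ {z : F | ∃ u v : E, RDisjoint u v ∧ x = u + v ∧ z = S u + T v} :=
    fun x => ⟨x, 0, rdisjoint_zero x, (add_zero x).symm, by rw [oao_zero hT, add_zero]⟩
  have hTmem : ∀ x : E, T x ∈ {z : F | ∃ u v : E, RDisjoint u v ∧ x = u + v ∧ z = S u + T v} :=
    fun x => ⟨0, x, rdisjoint_comm (rdisjoint_zero x),
      (zero_add x).symm, by rw [oao_zero hS, zero_add]⟩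
  refine ⟨?_, fun x => (hR x).1 (hSmem x), fun x => (hR x).1 (hTmem x), ?_⟩
  · -- IsOAO R
    intro x y hxy
    have hyx : RDisjoint y x := by unfold RDisjoint at hxy ⊢; rwa [inf_comm]
    apply le_antisymm
    · -- R (x+y) ≤ R x + R y
      apply (hR (x + y)).2
      rintro z ⟨u, v, huv, heq, rfl⟩
      obtain ⟨u₁, u₂, v₁, v₂, hu12, hv12, huv1, huv2, hu, hv, hx, hy⟩ :=
        split_decomp hxy huv heq
      have h1 : S u₁ + T v₁ ≤ R x := (hR x).1 ⟨u₁, v₁, huv1, hx, rfl⟩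
      have h2 : S u₂ + T v₂ ≤ R y := (hR y).1 ⟨u₂, v₂, huv2, hy, rfl⟩
      calc S u + T v = (S u₁ + T v₁) + (S u₂ + T v₂) := by
            rw [hu, hv, hS u₁ u₂ hu12, hT v₁ v₂ hv12]; abel
        _ ≤ R x + R y := add_le_add h1 h2
    · -- R x + R y ≤ R (x+y)
      rw [← le_sub_iff_add_le']
      apply (hR y).2
      rintro z₂ ⟨u₂, v₂, huv2, hy, rfl⟩
      rw [le_sub_iff_add_le', ← le_sub_iff_add_le]
      apply (hR x).2
      rintro z₁ ⟨u₁, v₁, huv1, hx, rfl⟩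
      rw [le_sub_iff_add_le]
      -- combine the two decompositions
      have hu1x : |u₁| ≤ |x| := hx ▸ abs_le_of_disj_add huv1
      have hv1x : |v₁| ≤ |x| := by
        rw [hx, add_comm]
        exact abs_le_of_disj_add (by unfold RDisjoint at huv1 ⊢; rwa [inf_comm])
      have hu2y : |u₂| ≤ |y| := hy ▸ abs_le_of_disj_add huv2
      have hv2y : |v₂| ≤ |y| := by
        rw [hy, add_comm]
        exact abs_le_of_disj_add (by unfold RDisjoint at huv2 ⊢; rwa [inf_comm])
      have hu12 : RDisjoint u₁ u₂ := rdisjoint_mono hu1x hu2y hxy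
      have hv12 : RDisjoint v₁ v₂ := rdisjoint_mono hv1x hv2y hxy
      have hu1v2 : RDisjoint u₁ v₂ := rdisjoint_mono hu1x hv2y hxy
      have hu2v1 : RDisjoint u₂ v₁ := rdisjoint_mono hu2y hv1x hyx
      have hbig : RDisjoint (u₁ + u₂) (v₁ + v₂) := by
        unfold RDisjoint
        rw [abs_add_of_disj hu12, abs_add_of_disj hv12]
        exact add_inf_add_eq_zero (abs_nonneg u₁) (abs_nonneg u₂) (abs_nonneg v₁)
          (abs_nonneg v₂) hu12 hv12 huv1 hu1v2 hu2v1 huv2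
      have hsum : x + y = (u₁ + u₂) + (v₁ + v₂) := by rw [hx, hy]; abel
      calc S u₁ + T v₁ + (S u₂ + T v₂)
          = S (u₁ + u₂) + T (v₁ + v₂) := by
            rw [hS u₁ u₂ hu12, hT v₁ v₂ hv12]; abel
        _ ≤ R (x + y) := (hR (x + y)).1 ⟨u₁ + u₂, v₁ + v₂, hbig, hsum, rfl⟩
  · -- upper bound minimality
    intro P hP hSP hTP x
    apply (hR x).2
    rintro z ⟨u, v, huv, rfl, rfl⟩
    calc S u + T v ≤ P u + P v := add_le_add (hSP u) (hTP v)
      _ = P (u + v) := (hP u v huv).symm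
end

section
/- Let $E, F$ be Riesz spaces and $T : E \to F$ an orthogonally additive operator. If for every $x \in E$ the supremum $R(x) = \sup\{T(u) - T(v) : x = u \sqcup v\}$ exists in $F$, then the modulus $|T| = T \vee (-T)$ exists in the ordered vector space of orthogonally additive operators and $|T|(x) = R(x)$ for all $x \in E$. -/
variable {E F : Type*}
  [Lattice E] [AddCommGroup E] [CovariantClass E E (· + ·) (· ≤ ·)]
  [Lattice F] [AddCommGroup F] [CovariantClass F F (· + ·) (· ≤ ·)]

section Aux

variable {G : Type*} [Lattice G] [AddCommGroup G] [CovariantClass G G (· + ·) (· ≤ ·)]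

/-- Riesz-type inequality: for nonneg `a b c`, `a ⊓ (b + c) ≤ a ⊓ b + a ⊓ c`. -/
lemma aux_inf_add_le {a b c : G} (ha : 0 ≤ a) (hb : 0 ≤ b) (hc : 0 ≤ c) :
    a ⊓ (b + c) ≤ a ⊓ b + a ⊓ c := by
  set d := a ⊓ (b + c) with hd
  have h1 : d - a ⊓ b ≤ a ⊓ c := by
    rw [sub_inf]
    apply sup_le
    · have : d - a ≤ 0 := sub_nonpos.2 inf_le_left
      exact this.trans (le_inf ha hc)
    · refine le_inf ?_ ?_
      · calc d - b ≤ a - b := sub_le_sub_right inf_le_left _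
          _ ≤ a := sub_le_self _ hb
      · calc d - b ≤ (b + c) - b := sub_le_sub_right inf_le_right _
          _ = c := by abel
  have := sub_le_iff_le_add.mp h1
  calc a ⊓ (b + c) = d := rfl
    _ ≤ a ⊓ c + a ⊓ b := this
    _ = a ⊓ b + a ⊓ c := add_comm _ _

lemma aux_rd_symm {a b : G} (h : RDisjoint a b) : RDisjoint b a := by
  rwa [RDisjoint, inf_comm]

lemma aux_rd_mono {a b c d : G} (h : RDisjoint c d) (h1 : |a| ≤ |c|) (h2 : |b| ≤ |d|) :
    RDisjoint a b := by
  have hle : |a| ⊓ |b| ≤ |c| ⊓ |d| := inf_le_inf h1 h2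
  have h0 : 0 ≤ |a| ⊓ |b| := le_inf (abs_nonneg a) (abs_nonneg b)
  exact le_antisymm (h ▸ hle) h0

lemma aux_rd_zero (a : G) : RDisjoint a 0 := by
  simp [RDisjoint]

/-- If `a ⊥ b` then `|a| ≤ |a + b|`. -/
lemma aux_abs_le_abs_add {a b : G} (h : RDisjoint a b) : |a| ≤ |a + b| := by
  have tri : |a| ≤ |a + b| + |b| := by
    calc |a| = |(a + b) + (-b)| := by rw [add_neg_cancel_right]
      _ ≤ |a + b| + |(-b)| := abs_add_le _ _
      _ = |a + b| + |b| := by rw [abs_neg]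
  have : |a| = |a| ⊓ (|a + b| + |b|) := (inf_eq_left.2 tri).symm
  calc |a| = |a| ⊓ (|a + b| + |b|) := this
    _ ≤ |a| ⊓ |a + b| + |a| ⊓ |b| :=
        aux_inf_add_le (abs_nonneg a) (abs_nonneg _) (abs_nonneg b)
    _ = |a| ⊓ |a + b| := by rw [h, add_zero]
    _ ≤ |a + b| := inf_le_right

/-- If `a ⊓ b = 0` with `a b ≥ 0`, and `0 ≤ c ≤ 3a`, `c ≤ 3b`, then `c = 0`. -/
lemma aux_eq_zero {a b c : G} (hab : a ⊓ b = 0) (ha : 0 ≤ a) (hb : 0 ≤ b) (hc : 0 ≤ c)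
    (h1 : c ≤ a + a + a) (h2 : c ≤ b + b + b) : c = 0 := by
  have hA : 0 ≤ a + a + a := by positivity
  have hab' : (a + a + a) ⊓ b = 0 := by
    have step : (a + a + a) ⊓ b ≤ 0 := by
      have e1 : b ⊓ (a + a + a) ≤ b ⊓ (a + a) + b ⊓ a := aux_inf_add_le hb (by positivity) ha
      have e2 : b ⊓ (a + a) ≤ b ⊓ a + b ⊓ a := aux_inf_add_le hb ha ha
      have e3 : b ⊓ a = 0 := by rwa [inf_comm]
      calc (a + a + a) ⊓ b = b ⊓ (a + a + a) := by rw [inf_comm]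
        _ ≤ b ⊓ (a + a) + b ⊓ a := e1
        _ ≤ (b ⊓ a + b ⊓ a) + b ⊓ a := add_le_add_left e2 _
        _ = 0 := by rw [e3]; abel
    exact le_antisymm step (le_inf hA hb)
  have hAB : (a + a + a) ⊓ (b + b + b) ≤ 0 := by
    have e1 : (a+a+a) ⊓ (b + b + b) ≤ (a+a+a) ⊓ (b + b) + (a+a+a) ⊓ b :=
      aux_inf_add_le hA (by positivity) hb
    have e2 : (a+a+a) ⊓ (b + b) ≤ (a+a+a) ⊓ b + (a+a+a) ⊓ b := aux_inf_add_le hA hb hb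
    calc (a+a+a) ⊓ (b + b + b) ≤ (a+a+a) ⊓ (b + b) + (a+a+a) ⊓ b := e1
      _ ≤ ((a+a+a) ⊓ b + (a+a+a) ⊓ b) + (a+a+a) ⊓ b := add_le_add_left e2 _
      _ = 0 := by rw [hab']; abel
  exact le_antisymm ((le_inf h1 h2).trans hAB) hc

/-- `|a - b| ≤ c` for `0 ≤ a, b ≤ c`. -/
lemma aux_abs_sub_le {a b c : G} (ha0 : 0 ≤ a) (hb0 : 0 ≤ b) (ha : a ≤ c) (hb : b ≤ c) :
    |a - b| ≤ c := by
  calc |a - b| = |b - a| := abs_sub_comm a b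
    _ = a ⊔ b - a ⊓ b := (sup_sub_inf_eq_abs_sub a b).symm
    _ ≤ a ⊔ b := sub_le_self _ (le_inf ha0 hb0)
    _ ≤ c := sup_le ha hb

/-- Disjoint decomposition of an element dominated by a disjoint sum. -/
lemma aux_decomp {x y u : G} (hxy : RDisjoint x y) (hu : |u| ≤ |x| + |y|) :
    ∃ u1 u2 : G, u = u1 + u2 ∧ |u1| ≤ |x| ∧ |u2| ≤ |y| ∧ |u1| ≤ |u| ∧ |u2| ≤ |u| := by
  have hx0 : (0:G) ≤ |x| := abs_nonneg x
  have hy0 : (0:G) ≤ |y| := abs_nonneg y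
  have key : ∀ w : G, 0 ≤ w → w ≤ |x| + |y| → w ⊓ |x| + w ⊓ |y| = w := by
    intro w hw hwle
    have hle : w ≤ w ⊓ |x| + w ⊓ |y| := by
      calc w = w ⊓ (|x| + |y|) := (inf_eq_left.2 hwle).symm
        _ ≤ w ⊓ |x| + w ⊓ |y| := aux_inf_add_le hw hx0 hy0
    have hge : w ⊓ |x| + w ⊓ |y| ≤ w := by
      have hd : (w ⊓ |x|) ⊓ (w ⊓ |y|) = 0 := by
        have h1 : (w ⊓ |x|) ⊓ (w ⊓ |y|) ≤ |x| ⊓ |y| :=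
          inf_le_inf inf_le_right inf_le_right
        have h0 : 0 ≤ (w ⊓ |x|) ⊓ (w ⊓ |y|) :=
          le_inf (le_inf hw hx0) (le_inf hw hy0)
        exact le_antisymm (hxy ▸ h1) h0
      have := inf_add_sup (w ⊓ |x|) (w ⊓ |y|)
      have hsum : w ⊓ |x| + w ⊓ |y| = (w ⊓ |x|) ⊔ (w ⊓ |y|) := by
        rw [← this, hd, zero_add]
      rw [hsum]
      exact sup_le inf_le_left inf_le_left
    exact le_antisymm hge hle
  have hup : u⁺ ≤ |u| := sup_le (le_abs_self u) (abs_nonneg u)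
  have hun : u⁻ ≤ |u| := sup_le (neg_le_abs u) (abs_nonneg u)
  have hp := key u⁺ (posPart_nonneg u) (hup.trans hu)
  have hn := key u⁻ (negPart_nonneg u) (hun.trans hu)
  refine ⟨u⁺ ⊓ |x| - u⁻ ⊓ |x|, u⁺ ⊓ |y| - u⁻ ⊓ |y|, ?_, ?_, ?_, ?_, ?_⟩
  · have := posPart_sub_negPart u
    calc u = u⁺ - u⁻ := this.symm
      _ = (u⁺ ⊓ |x| + u⁺ ⊓ |y|) - (u⁻ ⊓ |x| + u⁻ ⊓ |y|) := by rw [hp, hn]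
      _ = (u⁺ ⊓ |x| - u⁻ ⊓ |x|) + (u⁺ ⊓ |y| - u⁻ ⊓ |y|) := by abel
  · exact aux_abs_sub_le (le_inf (posPart_nonneg u) hx0) (le_inf (negPart_nonneg u) hx0)
      inf_le_right inf_le_right
  · exact aux_abs_sub_le (le_inf (posPart_nonneg u) hy0) (le_inf (negPart_nonneg u) hy0)
      inf_le_right inf_le_right
  · exact aux_abs_sub_le (le_inf (posPart_nonneg u) hx0) (le_inf (negPart_nonneg u) hx0)
      (inf_le_left.trans hup) (inf_le_left.trans hun)
  · exact aux_abs_sub_le (le_inf (posPart_nonneg u) hy0) (le_inf (negPart_nonneg u) hy0)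
      (inf_le_left.trans hup) (inf_le_left.trans hun)

/-- Splitting a disjoint decomposition of `x + y` along `x` and `y`. -/
lemma aux_split {x y u v : G} (hxy : RDisjoint x y) (huv : RDisjoint u v)
    (hsum : x + y = u + v) :
    ∃ u1 u2 v1 v2 : G, u = u1 + u2 ∧ v = v1 + v2 ∧
      RDisjoint u1 v1 ∧ RDisjoint u2 v2 ∧ x = u1 + v1 ∧ y = u2 + v2 ∧
      RDisjoint u1 u2 ∧ RDisjoint v1 v2 := by
  have habs : |u| ≤ |x| + |y| := by
    calc |u| ≤ |u + v| := aux_abs_le_abs_add huv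
      _ = |x + y| := by rw [hsum]
      _ ≤ |x| + |y| := abs_add_le x y
  have habs' : |v| ≤ |x| + |y| := by
    calc |v| ≤ |v + u| := aux_abs_le_abs_add (aux_rd_symm huv)
      _ = |x + y| := by rw [add_comm, hsum]
      _ ≤ |x| + |y| := abs_add_le x y
  obtain ⟨u1, u2, hu12, hu1x, hu2y, hu1u, hu2u⟩ := aux_decomp hxy habs
  obtain ⟨v1, v2, hv12, hv1x, hv2y, hv1v, hv2v⟩ := aux_decomp hxy habs'
  have hx0 : (0:G) ≤ |x| := abs_nonneg x
  have hy0 : (0:G) ≤ |y| := abs_nonneg y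
  -- show x = u1 + v1
  have hw : u1 + v1 - x = 0 := by
    set w := u1 + v1 - x with hwdef
    have hweq : w = -(u2 + v2 - y) := by
      apply eq_neg_of_add_eq_zero_left
      have hs : x + y = (u1 + u2) + (v1 + v2) := by rw [hsum, hu12, hv12]
      have h0 : (u1 + u2) + (v1 + v2) - (x + y) = 0 := by rw [← hs]; abel
      calc w + (u2 + v2 - y) = (u1 + u2) + (v1 + v2) - (x + y) := by rw [hwdef]; abel
        _ = 0 := h0
    have h3x : |w| ≤ |x| + |x| + |x| := by
      calc |w| = |(u1 + v1) + (-x)| := by rw [hwdef, sub_eq_add_neg]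
        _ ≤ |u1 + v1| + |(-x)| := abs_add_le _ _
        _ ≤ (|u1| + |v1|) + |x| := add_le_add (abs_add_le _ _) (le_of_eq (abs_neg x))
        _ ≤ (|x| + |x|) + |x| := add_le_add_left (add_le_add hu1x hv1x) _
    have h3y : |w| ≤ |y| + |y| + |y| := by
      calc |w| = |u2 + v2 - y| := by rw [hweq, abs_neg]
        _ = |(u2 + v2) + (-y)| := by rw [sub_eq_add_neg]
        _ ≤ |u2 + v2| + |(-y)| := abs_add_le _ _
        _ ≤ (|u2| + |v2|) + |y| := add_le_add (abs_add_le _ _) (le_of_eq (abs_neg y))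
        _ ≤ (|y| + |y|) + |y| := add_le_add_left (add_le_add hu2y hv2y) _
    have h0 : |w| = 0 := aux_eq_zero hxy hx0 hy0 (abs_nonneg w) h3x h3y
    have h1 : w ≤ 0 := h0 ▸ le_abs_self w
    have h2 : -w ≤ 0 := h0 ▸ neg_le_abs w
    exact le_antisymm h1 (neg_nonpos.mp h2)
  have hx : x = u1 + v1 := (sub_eq_zero.mp hw).symm
  have hy : y = u2 + v2 := by
    have hs : x + y = x + (u2 + v2) := by
      rw [hsum, hu12, hv12, hx]; abel
    exact add_left_cancel hs
  exact ⟨u1, u2, v1, v2, hu12, hv12,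
    aux_rd_mono huv hu1u hv1v, aux_rd_mono huv hu2u hv2v, hx, hy,
    aux_rd_mono hxy hu1x hu2y, aux_rd_mono hxy hv1x hv2y⟩

end Aux

/-- If `R x = sup {T u - T v : x = u ⊔ v}` exists for all `x`, then `R = |T| = T ∨ (-T)`
in the ordered vector space of OAOs. -/
theorem oao_abs_exists (T : E → F) (hT : IsOAO T) (R : E → F)
    (hR : ∀ x : E,
      IsLUB {z : F | ∃ u v : E, RDisjoint u v ∧ x = u + v ∧ z = T u - T v} (R x)) :
    IsOAO R ∧ (∀ x, T x ≤ R x) ∧ (∀ x, -T x ≤ R x) ∧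
    ∀ P : E → F, IsOAO P → (∀ x, T x ≤ P x) → (∀ x, -T x ≤ P x) → ∀ x, R x ≤ P x := by
  have hT0 : T 0 = 0 := by
    have h := hT 0 0 (aux_rd_zero 0)
    rw [add_zero] at h
    exact left_eq_add.mp h
  have hTmem : ∀ x : E, T x ∈ {z : F | ∃ u v : E, RDisjoint u v ∧ x = u + v ∧ z = T u - T v} := by
    intro x
    exact ⟨x, 0, aux_rd_zero x, by rw [add_zero], by rw [hT0, sub_zero]⟩
  have hTmem' : ∀ x : E, -T x ∈ {z : F | ∃ u v : E, RDisjoint u v ∧ x = u + v ∧ z = T u - T v} := by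
    intro x
    exact ⟨0, x, aux_rd_symm (aux_rd_zero x), by rw [zero_add], by rw [hT0, zero_sub]⟩
  refine ⟨?_, fun x => (hR x).1 (hTmem x), fun x => (hR x).1 (hTmem' x), ?_⟩
  · -- R is orthogonally additive
    intro x y hxy
    set Sx := {z : F | ∃ u v : E, RDisjoint u v ∧ x = u + v ∧ z = T u - T v}
    set Sy := {z : F | ∃ u v : E, RDisjoint u v ∧ y = u + v ∧ z = T u - T v}
    set Sxy := {z : F | ∃ u v : E, RDisjoint u v ∧ x + y = u + v ∧ z = T u - T v}
    -- addition in E: members combine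
    have hcomb : ∀ s ∈ Sx, ∀ t ∈ Sy, s + t ∈ Sxy := by
      rintro s ⟨u1, v1, h1, hx1, hs⟩ t ⟨u2, v2, h2, hy2, ht⟩
      have hu1x : |u1| ≤ |x| := by rw [hx1]; exact aux_abs_le_abs_add h1
      have hv1x : |v1| ≤ |x| := by
        rw [hx1, add_comm]; exact aux_abs_le_abs_add (aux_rd_symm h1)
      have hu2y : |u2| ≤ |y| := by rw [hy2]; exact aux_abs_le_abs_add h2
      have hv2y : |v2| ≤ |y| := by
        rw [hy2, add_comm]; exact aux_abs_le_abs_add (aux_rd_symm h2)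
      have huu : RDisjoint u1 u2 := aux_rd_mono hxy hu1x hu2y
      have hvv : RDisjoint v1 v2 := aux_rd_mono hxy hv1x hv2y
      have huv : RDisjoint (u1 + u2) (v1 + v2) := by
        have h12 : |u1 + u2| ≤ |x| + |y| := by
          calc |u1 + u2| ≤ |u1| + |u2| := abs_add_le _ _
            _ ≤ |x| + |y| := add_le_add hu1x hu2y
        -- |u1+u2| ⊓ |v1+v2| = 0 : show each pairing is disjoint
        have hv12 : |v1 + v2| ≤ |x| + |y| := by
          calc |v1 + v2| ≤ |v1| + |v2| := abs_add_le _ _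
            _ ≤ |x| + |y| := add_le_add hv1x hv2y
        -- use: |u1+u2| ⊓ |v1+v2| ≤ (|u1|+|u2|) ⊓ (|v1|+|v2|) ≤ ... = 0
        have key : (|u1| + |u2|) ⊓ (|v1| + |v2|) = 0 := by
          have hA : 0 ≤ |u1| + |u2| := by positivity
          have e1 : (|u1| + |u2|) ⊓ (|v1| + |v2|) ≤
              (|u1| + |u2|) ⊓ |v1| + (|u1| + |u2|) ⊓ |v2| :=
            aux_inf_add_le hA (abs_nonneg _) (abs_nonneg _)
          have e2 : (|u1| + |u2|) ⊓ |v1| ≤ |u1| ⊓ |v1| + |u2| ⊓ |v1| := by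
            rw [inf_comm]
            calc |v1| ⊓ (|u1| + |u2|) ≤ |v1| ⊓ |u1| + |v1| ⊓ |u2| :=
                aux_inf_add_le (abs_nonneg _) (abs_nonneg _) (abs_nonneg _)
              _ = |u1| ⊓ |v1| + |u2| ⊓ |v1| := by rw [inf_comm |v1| |u1|, inf_comm |v1| |u2|]
          have e3 : (|u1| + |u2|) ⊓ |v2| ≤ |u1| ⊓ |v2| + |u2| ⊓ |v2| := by
            rw [inf_comm]
            calc |v2| ⊓ (|u1| + |u2|) ≤ |v2| ⊓ |u1| + |v2| ⊓ |u2| :=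
                aux_inf_add_le (abs_nonneg _) (abs_nonneg _) (abs_nonneg _)
              _ = |u1| ⊓ |v2| + |u2| ⊓ |v2| := by rw [inf_comm |v2| |u1|, inf_comm |v2| |u2|]
          have z11 : |u1| ⊓ |v1| = 0 := h1
          have z22 : |u2| ⊓ |v2| = 0 := h2
          have z12 : |u1| ⊓ |v2| = 0 := aux_rd_mono hxy hu1x hv2y
          have z21 : |u2| ⊓ |v1| = 0 := aux_rd_mono (aux_rd_symm hxy) hu2y hv1x
          have hle : (|u1| + |u2|) ⊓ (|v1| + |v2|) ≤ 0 := by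
            calc (|u1| + |u2|) ⊓ (|v1| + |v2|)
                ≤ (|u1| + |u2|) ⊓ |v1| + (|u1| + |u2|) ⊓ |v2| := e1
              _ ≤ (|u1| ⊓ |v1| + |u2| ⊓ |v1|) + (|u1| ⊓ |v2| + |u2| ⊓ |v2|) :=
                  add_le_add e2 e3
              _ = 0 := by rw [z11, z21, z12, z22]; abel
          exact le_antisymm hle (le_inf (by positivity) (by positivity))
        have hle : |u1 + u2| ⊓ |v1 + v2| ≤ (|u1| + |u2|) ⊓ (|v1| + |v2|) :=
          inf_le_inf (abs_add_le _ _) (abs_add_le _ _)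
        exact le_antisymm (key ▸ hle) (le_inf (abs_nonneg _) (abs_nonneg _))
      refine ⟨u1 + u2, v1 + v2, huv, ?_, ?_⟩
      · rw [hx1, hy2]; abel
      · rw [hT _ _ huu, hT _ _ hvv, hs, ht]; abel
    -- members of Sxy split
    have hsplit : ∀ c ∈ Sxy, ∃ s ∈ Sx, ∃ t ∈ Sy, c = s + t := by
      rintro c ⟨u, v, huv, hsum, hc⟩
      obtain ⟨u1, u2, v1, v2, hu12, hv12, h11, h22, hx1, hy2, huu, hvv⟩ :=
        aux_split hxy huv hsum
      refine ⟨T u1 - T v1, ⟨u1, v1, h11, hx1, rfl⟩, T u2 - T v2, ⟨u2, v2, h22, hy2, rfl⟩, ?_⟩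
      rw [hc, hu12, hv12, hT _ _ huu, hT _ _ hvv]
      abel
    -- now LUB arithmetic
    have hub : R (x + y) ≤ R x + R y := by
      apply (hR (x + y)).2
      rintro c hc
      obtain ⟨s, hs, t, ht, rfl⟩ := hsplit c hc
      exact add_le_add ((hR x).1 hs) ((hR y).1 ht)
    have hlb : R x + R y ≤ R (x + y) := by
      have h1 : ∀ t ∈ Sy, t ≤ R (x + y) - R x := by
        intro t ht
        have h2 : R x ≤ R (x + y) - t := by
          apply (hR x).2
          intro s hs
          exact le_sub_iff_add_le.mpr ((hR (x + y)).1 (hcomb s hs t ht))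
        have h3 : R x + t ≤ R (x + y) := le_sub_iff_add_le.mp h2
        refine le_sub_iff_add_le.mpr ?_
        rwa [add_comm] at h3
      have h4 : R y ≤ R (x + y) - R x := (hR y).2 h1
      have h5 : R y + R x ≤ R (x + y) := le_sub_iff_add_le.mp h4
      rwa [add_comm] at h5
    exact le_antisymm hub hlb
  · -- minimality
    intro P hP hTP hTP' x
    apply (hR x).2
    rintro c ⟨u, v, huv, hxuv, rfl⟩
    calc T u - T v = T u + (-T v) := sub_eq_add_neg _ _
      _ ≤ P u + P v := add_le_add (hTP u) (hTP' v)
      _ = P x := by rw [hxuv, hP _ _ huv]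
end

section
/- Let $E, F$ be Riesz spaces and $T : E \to F$ a disjointness preserving orthogonally additive operator. Then $T$ is laterally-to-order bounded: for every $e \in E$, the set $\{T(x) : x \sqsubseteq e\}$ is order bounded in $F$. -/
variable {E F : Type*}
  [Lattice E] [AddCommGroup E] [CovariantClass E E (· + ·) (· ≤ ·)]
  [Lattice F] [AddCommGroup F] [CovariantClass F F (· + ·) (· ≤ ·)]

lemma abs_le_abs_add_of_rdisjoint {u v : F} (h : RDisjoint u v) : |u| ≤ |u + v| := by
  have h1 : |u| - |u + v| ≤ |v| := by
    have h0 := abs_add_le (u + v) (-v)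
    simp only [add_neg_cancel_right, abs_neg] at h0
    exact sub_le_iff_le_add'.mpr h0
  have h2 : |u| - |u + v| ≤ |u| := sub_le_self _ (abs_nonneg _)
  have h3 : |u| - |u + v| ≤ |u| ⊓ |v| := le_inf h2 h1
  rw [h] at h3
  exact sub_nonpos.mp h3

/-- A disjointness preserving OAO is laterally-to-order bounded. -/
theorem disjointness_preserving_oao_laterally_to_order_bounded (T : E → F)
    (hT : IsOAO T)
    (hd : ∀ x y : E, RDisjoint x y → RDisjoint (T x) (T y)) :
    ∀ e : E, ∃ a b : F, ∀ x : E, IsFragment x e → a ≤ T x ∧ T x ≤ b := by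
  intro e
  refine ⟨-|T e|, |T e|, fun x hx => ?_⟩
  have hte : T e = T x + T (e - x) := by
    have := hT x (e - x) hx
    simpa using this
  have key : |T x| ≤ |T e| := by
    rw [hte]
    exact abs_le_abs_add_of_rdisjoint (hd x (e - x) hx)
  constructor
  · exact neg_le.mpr ((neg_le_abs (T x)).trans key)
  · exact le_trans (le_abs_self (T x)) key
end

section
/- Let $E, F$ be Riesz spaces and $T : E \to F$ a disjointness preserving orthogonally additive operator. Then the modulus $|T| = T \vee (-T)$ exists in the ordered vector space of orthogonally additive operators, and $|T|(x) = |T(x)|$ for every $x \in E$. -/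
variable {E F : Type*}
  [Lattice E] [AddCommGroup E] [CovariantClass E E (· + ·) (· ≤ ·)]
  [Lattice F] [AddCommGroup F] [CovariantClass F F (· + ·) (· ≤ ·)]


lemma inf_add_le_of_nonneg' {F : Type*} [Lattice F] [AddCommGroup F]
    [CovariantClass F F (· + ·) (· ≤ ·)] {x y z : F} (hx : 0 ≤ x) (hy : 0 ≤ y) (hz : 0 ≤ z) :
    x ⊓ (y + z) ≤ x ⊓ y + x ⊓ z := by
  have heq : x ⊓ y + x ⊓ z = ((x + x) ⊓ (y + x)) ⊓ ((x + z) ⊓ (y + z)) := by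
    rw [add_inf, inf_add, inf_add]
  rw [heq]
  have h : x ⊓ (y + z) ≤ x := inf_le_left
  refine le_inf (le_inf ?_ ?_) (le_inf ?_ inf_le_right)
  · exact h.trans (le_add_of_nonneg_right hx)
  · exact h.trans (le_add_of_nonneg_left hy)
  · exact h.trans (le_add_of_nonneg_right hz)

lemma abs_add_of_rdisjoint' {F : Type*} [Lattice F] [AddCommGroup F]
    [CovariantClass F F (· + ·) (· ≤ ·)] {a b : F} (h : |a| ⊓ |b| = 0) :
    |a + b| = |a| + |b| := by
  have hab : |a| ≤ |a + b| := by
    have h1 : |a| ≤ |a + b| + |b| := by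
      calc |a| = |a + b + (-b)| := by rw [add_neg_cancel_right]
        _ ≤ |a + b| + |-b| := abs_add_le _ _
        _ = |a + b| + |b| := by rw [abs_neg]
    calc |a| = |a| ⊓ (|a + b| + |b|) := (inf_eq_left.2 h1).symm
      _ ≤ |a| ⊓ |a + b| + |a| ⊓ |b| :=
        inf_add_le_of_nonneg' (abs_nonneg _) (abs_nonneg _) (abs_nonneg _)
      _ = |a| ⊓ |a + b| := by rw [h, add_zero]
      _ ≤ |a + b| := inf_le_right
  have hbb : |b| ≤ |a + b| := by
    have h1 : |b| ≤ |a + b| + |a| := by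
      calc |b| = |a + b + (-a)| := by rw [add_comm a b, add_neg_cancel_right]
        _ ≤ |a + b| + |-a| := abs_add_le _ _
        _ = |a + b| + |a| := by rw [abs_neg]
    calc |b| = |b| ⊓ (|a + b| + |a|) := (inf_eq_left.2 h1).symm
      _ ≤ |b| ⊓ |a + b| + |b| ⊓ |a| :=
        inf_add_le_of_nonneg' (abs_nonneg _) (abs_nonneg _) (abs_nonneg _)
      _ = |b| ⊓ |a + b| := by rw [inf_comm |b| |a|, h, add_zero]
      _ ≤ |a + b| := inf_le_right
  have hsum : |a| + |b| = |a| ⊔ |b| := by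
    rw [← inf_add_sup |a| |b|, h, zero_add]
  exact le_antisymm (abs_add_le _ _) (by rw [hsum]; exact sup_le hab hbb)

/-- For a disjointness preserving OAO `T`, the modulus `|T| = T ∨ (-T)` exists in the
ordered vector space of OAOs and `|T|(x) = |T x|`. -/
theorem disjointness_preserving_oao_abs (T : E → F)
    (hT : IsOAO T)
    (hd : ∀ x y : E, RDisjoint x y → RDisjoint (T x) (T y)) :
    IsOAO (fun x => |T x|) ∧
    (∀ x : E, T x ≤ |T x|) ∧ (∀ x : E, -T x ≤ |T x|) ∧
    ∀ P : E → F, IsOAO P → (∀ x, T x ≤ P x) → (∀ x, -T x ≤ P x) →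
      ∀ x : E, |T x| ≤ P x := by
  refine ⟨?_, fun x => le_abs_self _, fun x => neg_le_abs _, ?_⟩
  · intro x y hxy
    simp only
    rw [hT x y hxy]
    exact abs_add_of_rdisjoint' (hd x y hxy)
  · intro P _ h1 h2 x
    rw [abs]
    exact sup_le (h1 x) (h2 x)
end

section
/- Let $E, F$ be Riesz spaces and $T : E \to F$ a disjointness preserving orthogonally additive operator. Then the maps $\phi(x) = (T(x))^+$ and $\psi(x) = (T(x))^-$ are disjointness preserving orthogonally additive operators, and $\phi = T \vee 0$ and $\psi = (-T) \vee 0$ in the ordered vector space of orthogonally additive operators; in particular $T$ is regular, with $T = T^+ - T^-$ and $T^\pm \ge 0$. -/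
variable {E F : Type*}
  [Lattice E] [AddCommGroup E] [CovariantClass E E (· + ·) (· ≤ ·)]
  [Lattice F] [AddCommGroup F] [CovariantClass F F (· + ·) (· ≤ ·)]

section Aux
variable {F : Type*} [Lattice F] [AddCommGroup F] [CovariantClass F F (· + ·) (· ≤ ·)]

lemma aux_inf_zero {a b p q : F} (h : |a| ⊓ |b| = 0) (hp0 : 0 ≤ p) (hq0 : 0 ≤ q)
    (hpa : p ≤ |a|) (hqb : q ≤ |b|) : p ⊓ q = 0 :=
  le_antisymm (h ▸ inf_le_inf hpa hqb) (le_inf hp0 hq0)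

lemma aux_posPart_add {a b : F} (h : |a| ⊓ |b| = 0) :
    (a + b)⁺ = a⁺ + b⁺ ∧ (a + b)⁻ = a⁻ + b⁻ := by
  letI : DistribLattice F := AddCommGroup.toDistribLattice F
  have hap : a⁺ ≤ |a| := sup_le (le_abs_self a) (abs_nonneg a)
  have han : a⁻ ≤ |a| := sup_le (neg_le_abs a) (abs_nonneg a)
  have hbp : b⁺ ≤ |b| := sup_le (le_abs_self b) (abs_nonneg b)
  have hbn : b⁻ ≤ |b| := sup_le (neg_le_abs b) (abs_nonneg b)
  have hpp := aux_inf_zero h (posPart_nonneg a) (posPart_nonneg b) hap hbp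
  have hpn := aux_inf_zero h (posPart_nonneg a) (negPart_nonneg b) hap hbn
  have hnp := aux_inf_zero h (negPart_nonneg a) (posPart_nonneg b) han hbp
  have hnn := aux_inf_zero h (negPart_nonneg a) (negPart_nonneg b) han hbn
  set u := a⁺ + b⁺ with hu
  set v := a⁻ + b⁻ with hv
  have hsumu : u = a⁺ ⊔ b⁺ := by
    have := inf_add_sup a⁺ b⁺
    rw [hpp, zero_add] at this
    rw [hu, ← this]
  have hsumv : v = a⁻ ⊔ b⁻ := by
    have := inf_add_sup a⁻ b⁻
    rw [hnn, zero_add] at this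
    rw [hv, ← this]
  have huv : u ⊓ v = 0 := by
    rw [hsumu, hsumv, inf_sup_left, inf_sup_right, inf_sup_right,
      posPart_inf_negPart_eq_zero, inf_comm b⁺ a⁻, hnp, hpn, posPart_inf_negPart_eq_zero]
    simp
  have hab : a + b = u - v := by
    rw [hu, hv]
    have ha := posPart_sub_negPart a
    have hb := posPart_sub_negPart b
    conv_lhs => rw [← ha, ← hb]
    abel
  constructor
  · have : (a + b)⁺ = u - v ⊓ u := by
      rw [posPart_def, hab, sub_inf, sub_self, sup_comm]
    rw [this, inf_comm, huv, sub_zero]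
  · have : (a + b)⁻ = v - u ⊓ v := by
      rw [negPart_def, hab, neg_sub, sub_inf, sub_self, sup_comm]
    rw [this, huv, sub_zero]

end Aux

/-- For a disjointness preserving OAO `T`, the maps `x ↦ (T x)⁺` and `x ↦ (T x)⁻` are
disjointness preserving OAOs equal to `T ∨ 0` and `(-T) ∨ 0` respectively; in
particular `T` is regular. -/


theorem disjointness_preserving_oao_posPart_negPart (T : E → F)
    (hT : IsOAO T)
    (hd : ∀ x y : E, RDisjoint x y → RDisjoint (T x) (T y)) :
    (IsOAO (fun x => (T x)⁺) ∧
      ∀ x y : E, RDisjoint x y → RDisjoint ((T x)⁺) ((T y)⁺)) ∧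
    (IsOAO (fun x => (T x)⁻) ∧
      ∀ x y : E, RDisjoint x y → RDisjoint ((T x)⁻) ((T y)⁻)) ∧
    ((∀ x : E, T x ≤ (T x)⁺) ∧ (∀ x : E, 0 ≤ (T x)⁺) ∧
      ∀ P : E → F, IsOAO P → (∀ x, T x ≤ P x) → (∀ x, 0 ≤ P x) →
        ∀ x : E, (T x)⁺ ≤ P x) ∧
    ((∀ x : E, -T x ≤ (T x)⁻) ∧ (∀ x : E, 0 ≤ (T x)⁻) ∧
      ∀ P : E → F, IsOAO P → (∀ x, -T x ≤ P x) → (∀ x, 0 ≤ P x) →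
        ∀ x : E, (T x)⁻ ≤ P x) ∧
    (∀ x : E, T x = (T x)⁺ - (T x)⁻) := by
  have habs : ∀ a : F, 0 ≤ a → |a| = a := fun a ha => abs_of_nonneg ha
  have hppd : ∀ x y : E, RDisjoint x y → RDisjoint ((T x)⁺) ((T y)⁺) := by
    intro x y hxy
    have h := hd x y hxy
    unfold RDisjoint at h ⊢
    rw [habs _ (posPart_nonneg _), habs _ (posPart_nonneg _)]
    exact aux_inf_zero h (posPart_nonneg _) (posPart_nonneg _)
      (sup_le (le_abs_self _) (abs_nonneg _)) (sup_le (le_abs_self _) (abs_nonneg _))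
  have hnnd : ∀ x y : E, RDisjoint x y → RDisjoint ((T x)⁻) ((T y)⁻) := by
    intro x y hxy
    have h := hd x y hxy
    unfold RDisjoint at h ⊢
    rw [habs _ (negPart_nonneg _), habs _ (negPart_nonneg _)]
    exact aux_inf_zero h (negPart_nonneg _) (negPart_nonneg _)
      (sup_le (neg_le_abs _) (abs_nonneg _)) (sup_le (neg_le_abs _) (abs_nonneg _))
  refine ⟨⟨?_, hppd⟩, ⟨?_, hnnd⟩, ⟨fun x => le_posPart _, fun x => posPart_nonneg _, ?_⟩,
    ⟨fun x => neg_le_negPart _, fun x => negPart_nonneg _, ?_⟩,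
    fun x => (posPart_sub_negPart (T x)).symm⟩
  · intro x y hxy
    simp only
    rw [hT x y hxy]
    exact (aux_posPart_add (hd x y hxy)).1
  · intro x y hxy
    simp only
    rw [hT x y hxy]
    exact (aux_posPart_add (hd x y hxy)).2
  · intro P _ hTP hP0 x
    exact sup_le (hTP x) (hP0 x)
  · intro P _ hTP hP0 x
    exact sup_le (hTP x) (hP0 x)
end

section
/- There exists a disjointness preserving orthogonally additive operator $T : C[0,1] \to C[0,1]$ and elements $x, y \in C[0,1]^+$ such that $(T(x))^+ \wedge (T(y))^- \ne 0$; namely, define $T(\mathbf{1}) = \mathbf{1}$, $T(2\cdot\mathbf{1}) = -\mathbf{1}$, and $T(z) = 0$ for all other $z$, where $\mathbf{1}$ is the constant-one function. Then $T$ is a disjointness preserving OAO and $(T(\mathbf{1}))^+ \wedge (T(2\cdot\mathbf{1}))^- = \mathbf{1} \ne 0$. -/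
namespace MeyerAux

abbrev E := C(Set.Icc (0:ℝ) 1, ℝ)

lemma rdis_apply {x y : E} (h : RDisjoint x y) (t : Set.Icc (0:ℝ) 1) :
    |x t| ⊓ |y t| = 0 := by
  have := congrFun (congrArg DFunLike.coe h) t
  simpa using this

lemma eq_zero_of_rdis_const {c : ℝ} (hc : c ≠ 0) {x y : E} (h : RDisjoint x y)
    (hy : ∀ t, y t = c) : x = 0 := by
  ext t
  have h1 := rdis_apply h t
  rw [hy t] at h1
  have hx : |x t| = 0 := by
    rcases le_total |x t| |c| with hle | hle
    · simpa [inf_eq_left.mpr hle] using h1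
    · have : |c| = 0 := by simpa [inf_eq_right.mpr hle] using h1
      exact absurd (abs_eq_zero.mp this) hc
  simpa using abs_eq_zero.mp hx

lemma zero_or_zero {c : ℝ} (hc : 0 < c) {x y : E} (h : RDisjoint x y)
    (hs : ∀ t, x t + y t = c) : x = 0 ∨ y = 0 := by
  have hval : ∀ t, x t = 0 ∨ x t = c := by
    intro t
    have h1 := rdis_apply h t
    rcases le_total |x t| |y t| with hle | hle
    · left
      rw [inf_eq_left.mpr hle] at h1
      simpa using h1
    · right
      rw [inf_eq_right.mpr hle] at h1
      have : y t = 0 := by simpa using h1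
      have := hs t; linarith
  by_cases hx0 : ∀ t, x t = 0
  · left; ext t; simpa using hx0 t
  · push_neg at hx0
    obtain ⟨b, hb⟩ := hx0
    have hbc : x b = c := (hval b).resolve_left hb
    right; ext t
    have hxt : x t = c := by
      by_contra hxtc
      have hxt0 : x t = 0 := (hval t).resolve_right hxtc
      have hsub : Set.Icc (x t) (x b) ⊆ Set.range x :=
        intermediate_value_univ t b x.continuous
      have : c / 2 ∈ Set.Icc (x t) (x b) := by
        rw [hxt0, hbc]; constructor <;> linarith
      obtain ⟨s, hs'⟩ := hsub this
      rcases hval s with h' | h' <;> rw [h'] at hs' <;> linarith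
    have := hs t
    simp only [ContinuousMap.zero_apply]
    linarith

lemma one_apply (t : Set.Icc (0:ℝ) 1) : (1 : E) t = 1 := rfl

lemma two_apply (t : Set.Icc (0:ℝ) 1) : (2 • (1:E)) t = 2 := by
  simp [two_smul]
  norm_num [one_apply]

lemma one_ne_zero' : (1 : E) ≠ 0 := by
  intro h
  have := congrFun (congrArg DFunLike.coe h) ⟨0, by norm_num⟩
  simp [one_apply] at this

lemma two_ne_zero' : (2 • (1:E)) ≠ 0 := by
  intro h
  have := congrFun (congrArg DFunLike.coe h) ⟨0, by norm_num⟩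
  rw [two_apply] at this
  simp at this

lemma one_ne_two : (1 : E) ≠ 2 • (1:E) := by
  intro h
  have := congrFun (congrArg DFunLike.coe h) ⟨0, by norm_num⟩
  rw [one_apply, two_apply] at this
  norm_num at this

open Classical in
noncomputable def T : E → E := fun z =>
  if z = 1 then 1 else if z = 2 • (1:E) then -1 else 0

lemma T_one : T 1 = 1 := by unfold T; rw [if_pos rfl]

lemma T_two : T (2 • (1:E)) = -1 := by
  unfold T; rw [if_neg one_ne_two.symm, if_pos rfl]

lemma T_other {z : E} (h1 : z ≠ 1) (h2 : z ≠ 2 • (1:E)) : T z = 0 := by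
  unfold T; rw [if_neg h1, if_neg h2]

lemma T_zero : T 0 = 0 := T_other one_ne_zero'.symm two_ne_zero'.symm

lemma rdis_zero (a : E) : RDisjoint a 0 := by
  unfold RDisjoint
  simp

lemma rdis_comm {a b : E} (h : RDisjoint a b) : RDisjoint b a := by
  unfold RDisjoint at *; rw [inf_comm]; exact h

/-- If `x ⊥ y` and `x = 1` then `y = 0`. -/
lemma disj_one {x y : E} (h : RDisjoint x y) (hx : x = 1) : y = 0 :=
  eq_zero_of_rdis_const (c := 1) one_ne_zero (rdis_comm h)
    (fun t => hx ▸ one_apply t)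

lemma disj_two {x y : E} (h : RDisjoint x y) (hx : x = 2 • (1:E)) : y = 0 :=
  eq_zero_of_rdis_const (c := 2) two_ne_zero (rdis_comm h)
    (fun t => hx ▸ two_apply t)

lemma T_oao : IsOAO T := by
  intro x y h
  by_cases hx : x = 0
  · subst hx; rw [T_zero, zero_add, zero_add]
  by_cases hy : y = 0
  · subst hy; rw [T_zero, add_zero, add_zero]
  -- neither is zero; then x+y ≠ 1 and x+y ≠ 2•1
  have hs1 : x + y ≠ 1 := by
    intro hsum
    have : ∀ t, x t + y t = 1 := by
      intro t
      have := congrFun (congrArg DFunLike.coe hsum) t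
      simpa [one_apply] using this
    rcases zero_or_zero one_pos h this with h' | h' <;> [exact hx h'; exact hy h']
  have hs2 : x + y ≠ 2 • (1:E) := by
    intro hsum
    have : ∀ t, x t + y t = 2 := by
      intro t
      have := congrFun (congrArg DFunLike.coe hsum) t
      rw [two_apply] at this; simpa using this
    rcases zero_or_zero two_pos h this with h' | h' <;> [exact hx h'; exact hy h']
  have hx1 : x ≠ 1 := fun h' => hy (disj_one h h')
  have hx2 : x ≠ 2 • (1:E) := fun h' => hy (disj_two h h')
  have hy1 : y ≠ 1 := fun h' => hx (disj_one (rdis_comm h) h')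
  have hy2 : y ≠ 2 • (1:E) := fun h' => hx (disj_two (rdis_comm h) h')
  rw [T_other hs1 hs2, T_other hx1 hx2, T_other hy1 hy2, add_zero]

lemma T_pres : ∀ x y : E, RDisjoint x y → RDisjoint (T x) (T y) := by
  intro x y h
  by_cases hx1 : x = 1
  · have : y = 0 := disj_one h hx1
    rw [this, T_zero]; exact rdis_zero _
  by_cases hx2 : x = 2 • (1:E)
  · have : y = 0 := disj_two h hx2
    rw [this, T_zero]; exact rdis_zero _
  · rw [T_other hx1 hx2]; exact rdis_comm (rdis_zero _)

end MeyerAux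

/-- Meyer's lemma fails for OAOs on positive (not laterally bounded) elements:
the OAO on `C[0,1]` sending `𝟏 ↦ 𝟏`, `2·𝟏 ↦ -𝟏` and everything else to `0` preserves
disjointness, yet `(T 𝟏)⁺ ⊓ (T (2·𝟏))⁻ = 𝟏 ≠ 0`. -/
theorem meyer_lemma_fails_for_oao :
    ∃ T : C(Set.Icc (0:ℝ) 1, ℝ) → C(Set.Icc (0:ℝ) 1, ℝ),
      IsOAO T ∧
      (∀ x y, RDisjoint x y → RDisjoint (T x) (T y)) ∧
      T 1 = 1 ∧
      T (2 • (1 : C(Set.Icc (0:ℝ) 1, ℝ))) = -1 ∧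
      (∀ z : C(Set.Icc (0:ℝ) 1, ℝ),
        z ≠ 1 → z ≠ 2 • (1 : C(Set.Icc (0:ℝ) 1, ℝ)) → T z = 0) ∧
      (0 : C(Set.Icc (0:ℝ) 1, ℝ)) ≤ 1 ∧
      (0 : C(Set.Icc (0:ℝ) 1, ℝ)) ≤ 2 • (1 : C(Set.Icc (0:ℝ) 1, ℝ)) ∧
      (T 1)⁺ ⊓ (T (2 • (1 : C(Set.Icc (0:ℝ) 1, ℝ))))⁻ = 1 ∧
      (1 : C(Set.Icc (0:ℝ) 1, ℝ)) ≠ 0 := by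
  refine ⟨MeyerAux.T, MeyerAux.T_oao, MeyerAux.T_pres, MeyerAux.T_one, MeyerAux.T_two,
    fun z h1 h2 => MeyerAux.T_other h1 h2, ?_, ?_, ?_, MeyerAux.one_ne_zero'⟩
  · rw [ContinuousMap.le_def]; intro t; simp [MeyerAux.one_apply]
  · rw [ContinuousMap.le_def]; intro t; rw [MeyerAux.two_apply]; norm_num
  · rw [MeyerAux.T_one, MeyerAux.T_two]
    have h1 : (1 : C(Set.Icc (0:ℝ) 1, ℝ))⁺ = 1 :=
      posPart_eq_self.mpr (by rw [ContinuousMap.le_def]; intro t; simp [MeyerAux.one_apply])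
    have h2 : (-1 : C(Set.Icc (0:ℝ) 1, ℝ))⁻ = 1 := by rw [negPart_neg]; exact h1
    rw [h1, h2, inf_idem]
end
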